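/- arXiv:2511.19358 — 11 statements merged into one kernel-verified Lean document; each statement's English description precedes it below -/
import Mathlib

section
/- Let f : 2^A → ℝ≥0 be an XOS function on a finite set A (i.e., f(S) = max over a finite collection of additive functions a_ℓ of a_ℓ(S), with f(S) ≥ a_ℓ(S) for all ℓ, S). Let A be partitioned into disjoint sets A_1, ..., A_n, and for S ⊆ A write S_i = S ∩ A_i and S_{-i} = S \ A_i. Then for every S ⊆ A and every subset N' ⊆ {1,...,n}: ∑_{i ∈ N'} (f(S) − f(S_{-i})) ≤ f(⋃_{i ∈ N'} S_i). -/
open Finset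

/-- For an XOS function `f` (pointwise max of finitely many
nonnegative additive functions) on a finite ground set `V` partitioned into
agents' action sets via `ag`, for every `S` and every set of agents `N'`,
`∑_{i ∈ N'} (f(S) − f(S_{-i})) ≤ f(⋃_{i ∈ N'} S_i)`. -/
theorem xos_marginal_sum_le (n k : ℕ) (V : Type*) [Fintype V] [DecidableEq V]
    (ag : V → Fin n) (f : Finset V → ℝ) (w : Fin k → V → ℝ)
    (hw : ∀ (l : Fin k) (j : V), 0 ≤ w l j)
    (hmax : ∀ S : Finset V, ∃ l : Fin k, f S = ∑ j ∈ S, w l j)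
    (hub : ∀ (S : Finset V) (l : Fin k), ∑ j ∈ S, w l j ≤ f S) :
    ∀ (S : Finset V) (N' : Finset (Fin n)),
      ∑ i ∈ N', (f S - f (S.filter (fun j => ag j ≠ i)))
        ≤ f (S.filter (fun j => ag j ∈ N')) := by
  intro S N'
  obtain ⟨l, hl⟩ := hmax S
  have key : ∀ i ∈ N', f S - f (S.filter (fun j => ag j ≠ i))
      ≤ ∑ j ∈ S.filter (fun j => ag j = i), w l j := by
    intro i _
    have hsplit : ∑ j ∈ S, w l j
        = ∑ j ∈ S.filter (fun j => ag j = i), w l j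
          + ∑ j ∈ S.filter (fun j => ¬ ag j = i), w l j :=
      (Finset.sum_filter_add_sum_filter_not S _ _).symm
    have h2 := hub (S.filter (fun j => ag j ≠ i)) l
    simp only [ne_eq] at h2
    rw [hl, hsplit]
    linarith
  calc ∑ i ∈ N', (f S - f (S.filter (fun j => ag j ≠ i)))
      ≤ ∑ i ∈ N', ∑ j ∈ S.filter (fun j => ag j = i), w l j :=
        Finset.sum_le_sum key
    _ = ∑ j ∈ S.filter (fun j => ag j ∈ N'), w l j :=
        Finset.sum_fiberwise_eq_sum_filter S N' ag (w l)
    _ ≤ f (S.filter (fun j => ag j ∈ N')) := hub _ l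
end

section
/- In a multi-agent contract game with finite action set A partitioned into A_1,...,A_n, reward f : 2^A → ℝ≥0, additive costs c : A → ℝ≥0, and contract α ∈ [0,1]^n, define agent i's utility u_i(S) = α_i · f(S) − ∑_{j ∈ S_i} c_j and the potential Φ(S) = f(S) − ∑_i (∑_{j ∈ S_i} c_j)/α_i (with c/0 := ∞ for c > 0 and 0/0 := 0). Then Φ is a weighted potential: for every agent i, every S_{-i} ⊆ A \ A_i, and every pair S_i, S'_i ⊆ A_i with α_i > 0, u_i(S_i ∪ S_{-i}) − u_i(S'_i ∪ S_{-i}) = α_i · (Φ(S_i ∪ S_{-i}) − Φ(S'_i ∪ S_{-i})). -/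
open Finset

/-- `Φ(S) = f(S) − ∑_i c(S_i)/α_i` is a weighted potential: for any agent `i`
with `α_i > 0`, any profile `S_{-i}` of the other agents, and any two strategies
`S_i, S'_i ⊆ A_i`, the difference in agent `i`'s utilities equals `α_i` times the
difference in potentials.  (Division is real division; the paper's convention
`0/0 = 0` is Lean's convention, and terms with `α_j = 0` cancel in the difference.) -/
theorem weighted_potential (n : ℕ) (V : Type*) [Fintype V] [DecidableEq V]
    (ag : V → Fin n) (f : Finset V → ℝ)
    (hnn : ∀ S : Finset V, 0 ≤ f S)
    (c : V → ℝ) (hc : ∀ j, 0 ≤ c j)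
    (α : Fin n → ℝ) (hα : ∀ i, 0 ≤ α i ∧ α i ≤ 1)
    (Φ : Finset V → ℝ)
    (hΦ : ∀ S : Finset V,
      Φ S = f S - ∑ i : Fin n, (∑ j ∈ S.filter (fun j => ag j = i), c j) / α i)
    (i : Fin n) (hi : 0 < α i)
    (Sm : Finset V) (hSm : ∀ j ∈ Sm, ag j ≠ i)
    (Si Si' : Finset V) (hSi : ∀ j ∈ Si, ag j = i) (hSi' : ∀ j ∈ Si', ag j = i) :
    (α i * f (Si ∪ Sm) - ∑ j ∈ Si, c j) - (α i * f (Si' ∪ Sm) - ∑ j ∈ Si', c j)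
      = α i * (Φ (Si ∪ Sm) - Φ (Si' ∪ Sm)) := by
  have key : ∀ T : Finset V, (∀ j ∈ T, ag j = i) →
      ∑ k : Fin n, (∑ j ∈ (T ∪ Sm).filter (fun j => ag j = k), c j) / α k
        = (∑ j ∈ T, c j) / α i
          + ∑ k : Fin n, (∑ j ∈ Sm.filter (fun j => ag j = k), c j) / α k := by
    intro T hT
    have hfil : ∀ k : Fin n, (T ∪ Sm).filter (fun j => ag j = k)
        = T.filter (fun j => ag j = k) ∪ Sm.filter (fun j => ag j = k) := by
      intro k; exact Finset.filter_union _ _ _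
    have hdisj : ∀ k : Fin n,
        Disjoint (T.filter (fun j => ag j = k)) (Sm.filter (fun j => ag j = k)) := by
      intro k
      refine Finset.disjoint_left.mpr ?_
      intro j hj1 hj2
      exact hSm j (Finset.mem_filter.mp hj2).1 (by rw [hT j (Finset.mem_filter.mp hj1).1])
    have : ∀ k : Fin n, (∑ j ∈ (T ∪ Sm).filter (fun j => ag j = k), c j) / α k
        = (∑ j ∈ T.filter (fun j => ag j = k), c j) / α k
          + (∑ j ∈ Sm.filter (fun j => ag j = k), c j) / α k := by
      intro k
      rw [hfil k, Finset.sum_union (hdisj k), add_div]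
    rw [Finset.sum_congr rfl (fun k _ => this k), Finset.sum_add_distrib]
    congr 1
    rw [Finset.sum_eq_single i]
    · rw [Finset.filter_true_of_mem hT]
    · intro k _ hk
      have : T.filter (fun j => ag j = k) = ∅ := by
        apply Finset.filter_false_of_mem
        intro j hj h; exact hk (h ▸ (hT j hj).symm ▸ rfl)
      simp [this]
    · intro h; exact absurd (Finset.mem_univ i) h
  rw [hΦ, hΦ, key Si hSi, key Si' hSi']
  have hne : α i ≠ 0 := ne_of_gt hi
  field_simp
  ring
end

section
/- Scaling-for-Existence Lemma: Let f be XOS on finite A partitioned into A_1,...,A_n, with additive costs c_j ≥ 0, contract α ∈ [0,1]^n, and let D be a distribution over subsets of A that is dropout-stable with respect to α (for every agent i, E_{S∼D}[α_i f(S) − c(S_i)] ≥ E_{S∼D}[α_i f(S_{-i})]). For any N' ⊆ {1,...,n} and γ > 1, define α' by α'_i = γ α_i for i ∈ N' and α'_i = 0 otherwise. Then there exists a pure Nash equilibrium S' with respect to α' satisfying f(S') ≥ (1 − 1/γ) · E_{S∼D}[f(⋃_{i ∈ N'} S_i)]. -/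
open Finset

/-- Scaling-for-Existence Lemma: For an XOS reward `f`, nonnegative additive
costs, contract `α ∈ [0,1]^n`, and a dropout-stable distribution `D` w.r.t. `α`: for any
subset of agents `N'` and `γ > 1`, setting `α'_i = γ α_i` on `N'` and `0` elsewhere, there
exists a pure Nash equilibrium `S'` of `α'` with
`f(S') ≥ (1 − 1/γ) · E_{S∼D}[f(⋃_{i∈N'} S_i)]`. -/
theorem scaling_for_existence (n k : ℕ) (V : Type*) [Fintype V] [DecidableEq V]
    (ag : V → Fin n) (f : Finset V → ℝ)
    (hf0 : f ∅ = 0)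
    (hnn : ∀ S : Finset V, 0 ≤ f S)
    (hmono : ∀ S T : Finset V, S ⊆ T → f S ≤ f T)
    -- XOS structure
    (w : Fin k → V → ℝ)
    (hw : ∀ (l : Fin k) (j : V), 0 ≤ w l j)
    (hmax : ∀ S : Finset V, ∃ l : Fin k, f S = ∑ j ∈ S, w l j)
    (hub : ∀ (S : Finset V) (l : Fin k), ∑ j ∈ S, w l j ≤ f S)
    -- costs and contract
    (c : V → ℝ) (hc : ∀ j, 0 ≤ c j)
    (α : Fin n → ℝ) (hα : ∀ i, 0 ≤ α i ∧ α i ≤ 1)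
    -- distribution D, dropout-stable w.r.t. α
    (D : Finset V → ℝ) (hD : ∀ S, 0 ≤ D S) (hDsum : ∑ S : Finset V, D S = 1)
    (hstable : ∀ i : Fin n,
      ∑ S : Finset V, D S * (α i * f S - ∑ j ∈ S.filter (fun j => ag j = i), c j)
        ≥ ∑ S : Finset V, D S * (α i * f (S.filter (fun j => ag j ≠ i))))
    (N' : Finset (Fin n)) (γ : ℝ) (hγ : 1 < γ)
    (α' : Fin n → ℝ) (hα' : ∀ i, α' i = if i ∈ N' then γ * α i else 0) :
    ∃ S' : Finset V,
      (∀ i : Fin n, ∀ Ti ⊆ univ.filter (fun j => ag j = i),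
        α' i * f ((S'.filter (fun j => ag j ≠ i)) ∪ (S'.filter (fun j => ag j = i)))
            - ∑ j ∈ S'.filter (fun j => ag j = i), c j
          ≥ α' i * f ((S'.filter (fun j => ag j ≠ i)) ∪ Ti) - ∑ j ∈ Ti, c j)
      ∧ f S' ≥ (1 - 1/γ) * ∑ S : Finset V, D S * f (S.filter (fun j => ag j ∈ N')) := by
  classical
  have hγ0 : (0:ℝ) < γ := lt_trans one_pos hγ
  have hapos : ∀ i : Fin n, α i ≠ 0 → 0 < γ * α i := fun i hi =>
    mul_pos hγ0 (lt_of_le_of_ne (hα i).1 (Ne.symm hi))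
  -- weights for the potential
  set d : V → ℝ := fun j => if α (ag j) = 0 then 0 else c j / (γ * α (ag j)) with hd_def
  have hd0 : ∀ j, 0 ≤ d j := by
    intro j
    simp only [hd_def]
    split_ifs with h
    · exact le_refl 0
    · exact div_nonneg (hc j) (hapos _ h).le
  -- zero-α agents have zero cost on the support of D
  have hzero : ∀ i : Fin n, α i = 0 → ∀ S : Finset V, D S ≠ 0 →
      ∀ j ∈ S, ag j = i → c j = 0 := by
    intro i hi S hS j hjS hji
    have h := hstable i
    rw [hi] at h
    simp only [zero_mul, zero_sub, mul_zero, mul_neg] at h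
    have hsum0 : ∑ T : Finset V, D T * ∑ j ∈ T.filter (fun j => ag j = i), c j = 0 := by
      have hle : ∑ T : Finset V, D T * ∑ j ∈ T.filter (fun j => ag j = i), c j ≤ 0 := by
        have h2 := h
        simp only [Finset.sum_neg_distrib, Finset.sum_const_zero] at h2
        linarith
      have hge : 0 ≤ ∑ T : Finset V, D T * ∑ j ∈ T.filter (fun j => ag j = i), c j :=
        Finset.sum_nonneg fun T _ =>
          mul_nonneg (hD T) (Finset.sum_nonneg fun j _ => hc j)
      linarith
    have heach := (Finset.sum_eq_zero_iff_of_nonneg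
      (fun T _ => mul_nonneg (hD T) (Finset.sum_nonneg fun j _ => hc j))).mp hsum0
    have hSterm := heach S (Finset.mem_univ S)
    have hcS : ∑ j ∈ S.filter (fun j => ag j = i), c j = 0 := by
      rcases mul_eq_zero.mp hSterm with h' | h'
      · exact absurd h' hS
      · exact h'
    have := (Finset.sum_eq_zero_iff_of_nonneg (fun j _ => hc j)).mp hcS
    exact this j (Finset.mem_filter.mpr ⟨hjS, hji⟩)
  -- the feasible set P and potential Φ
  set P : Finset V :=
    univ.filter (fun j => ag j ∈ N' ∧ (α (ag j) ≠ 0 ∨ c j = 0)) with hP_def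
  set Φ : Finset V → ℝ := fun S => f S - ∑ j ∈ S, d j with hΦ_def
  obtain ⟨S', hS'mem, hS'max⟩ := P.powerset.exists_max_image Φ ⟨∅, by simp⟩
  have hS'P : S' ⊆ P := Finset.mem_powerset.mp hS'mem
  have hS'prop : ∀ j ∈ S', ag j ∈ N' ∧ (α (ag j) ≠ 0 ∨ c j = 0) := by
    intro j hj
    have := hS'P hj
    rw [hP_def, Finset.mem_filter] at this
    exact this.2
  refine ⟨S', ?_, ?_⟩
  · -- Nash equilibrium property
    intro i Ti hTi
    have hTi' : ∀ j ∈ Ti, ag j = i := by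
      intro j hj
      have := hTi hj
      rw [Finset.mem_filter] at this
      exact this.2
    rw [hα' i]
    by_cases hiN : i ∈ N'
    · rw [if_pos hiN]
      by_cases hai : α i = 0
      · -- degenerate agent: zero payment, zero cost in S'
        have hcS' : ∑ j ∈ S'.filter (fun j => ag j = i), c j = 0 :=
          Finset.sum_eq_zero (by
            intro j hj
            rw [Finset.mem_filter] at hj
            rcases (hS'prop j hj.1).2 with h' | h'
            · exact absurd (hj.2 ▸ hai) h'
            · exact h')
        have hTc : 0 ≤ ∑ j ∈ Ti, c j := Finset.sum_nonneg fun j _ => hc j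
        rw [hai, hcS']
        simp only [mul_zero, zero_mul, zero_sub, sub_zero]
        linarith
      · -- potential argument
        have hq : 0 < γ * α i := hapos i hai
        set B := S'.filter (fun j => ag j ≠ i) with hB
        set Si := S'.filter (fun j => ag j = i) with hSi
        have hBag : ∀ j ∈ B, ag j ≠ i := fun j hj => (Finset.mem_filter.mp hj).2
        have hSiag : ∀ j ∈ Si, ag j = i := fun j hj => (Finset.mem_filter.mp hj).2
        have hdisj1 : Disjoint B Si := by
          rw [Finset.disjoint_left]
          intro j hj1 hj2
          exact hBag j hj1 (hSiag j hj2)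
        have hdisj2 : Disjoint B Ti := by
          rw [Finset.disjoint_left]
          intro j hj1 hj2
          exact hBag j hj1 (hTi' j hj2)
        have hunion : B ∪ Si = S' := by
          ext j
          simp only [hB, hSi, Finset.mem_union, Finset.mem_filter]
          tauto
        have hS''mem : B ∪ Ti ∈ P.powerset := by
          rw [Finset.mem_powerset]
          intro j hj
          rcases Finset.mem_union.mp hj with hj' | hj'
          · exact hS'P ((Finset.filter_subset _ _) hj')
          · rw [hP_def, Finset.mem_filter]
            exact ⟨Finset.mem_univ j, by rw [hTi' j hj']; exact ⟨hiN, Or.inl hai⟩⟩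
        have hmaxapp : Φ (B ∪ Ti) ≤ Φ S' := hS'max _ hS''mem
        have hdSi : ∑ j ∈ Si, d j = (∑ j ∈ Si, c j) / (γ * α i) := by
          rw [Finset.sum_div]
          refine Finset.sum_congr rfl (fun j hj => ?_)
          simp only [hd_def]
          rw [hSiag j hj, if_neg hai]
        have hdTi : ∑ j ∈ Ti, d j = (∑ j ∈ Ti, c j) / (γ * α i) := by
          rw [Finset.sum_div]
          refine Finset.sum_congr rfl (fun j hj => ?_)
          simp only [hd_def]
          rw [hTi' j hj, if_neg hai]
        have hsplit1 : ∑ j ∈ S', d j = ∑ j ∈ B, d j + ∑ j ∈ Si, d j := by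
          rw [← hunion, Finset.sum_union hdisj1]
        have hsplit2 : ∑ j ∈ B ∪ Ti, d j = ∑ j ∈ B, d j + ∑ j ∈ Ti, d j :=
          Finset.sum_union hdisj2
        simp only [hΦ_def] at hmaxapp
        rw [hsplit1, hsplit2, hdSi, hdTi] at hmaxapp
        have h2 : f (B ∪ Ti) - (∑ j ∈ Ti, c j) / (γ * α i)
            ≤ f S' - (∑ j ∈ Si, c j) / (γ * α i) := by linarith
        have h3 := mul_le_mul_of_nonneg_left h2 hq.le
        rw [mul_sub, mul_sub, mul_div_cancel₀ _ hq.ne', mul_div_cancel₀ _ hq.ne'] at h3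
        have hfS' : f (B ∪ Si) = f S' := by rw [hunion]
        rw [ge_iff_le, hfS']
        exact h3
    · -- agent outside N'
      rw [if_neg hiN]
      have hSiempty : S'.filter (fun j => ag j = i) = ∅ := by
        rw [Finset.filter_eq_empty_iff]
        intro j hj hji
        exact hiN (hji ▸ (hS'prop j hj).1)
      rw [hSiempty]
      simp only [zero_mul, zero_sub, Finset.sum_empty, neg_zero]
      have : 0 ≤ ∑ j ∈ Ti, c j := Finset.sum_nonneg fun j _ => hc j
      linarith
  · -- value guarantee
    set NP : Finset (Fin n) := N'.filter (fun i => α i ≠ 0) with hNP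
    set E : ℝ := ∑ S : Finset V, D S * f (S.filter (fun j => ag j ∈ N')) with hE
    -- pointwise XOS bound
    have hXOS : ∀ S : Finset V,
        ∑ i ∈ NP, (f S - f (S.filter (fun j => ag j ≠ i)))
          ≤ f (S.filter (fun j => ag j ∈ N')) := by
      intro S
      obtain ⟨l, hl⟩ := hmax S
      have hterm : ∀ i ∈ NP, f S - f (S.filter (fun j => ag j ≠ i))
          ≤ ∑ j ∈ S.filter (fun j => ag j = i), w l j := by
        intro i _
        have h1 : ∑ j ∈ S.filter (fun j => ag j ≠ i), w l j
            ≤ f (S.filter (fun j => ag j ≠ i)) := hub _ l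
        have hdisj : Disjoint (S.filter (fun j => ag j = i))
            (S.filter (fun j => ag j ≠ i)) := by
          rw [Finset.disjoint_left]
          intro j hj1 hj2
          exact (Finset.mem_filter.mp hj2).2 (Finset.mem_filter.mp hj1).2
        have hu : (S.filter (fun j => ag j = i)) ∪ (S.filter (fun j => ag j ≠ i)) = S := by
          ext j
          simp only [Finset.mem_union, Finset.mem_filter]
          tauto
        have h2 : ∑ j ∈ S.filter (fun j => ag j = i), w l j
            + ∑ j ∈ S.filter (fun j => ag j ≠ i), w l j = f S := by
          rw [hl, ← Finset.sum_union hdisj, hu]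
        linarith
      have hfib : ∑ i ∈ NP, ∑ j ∈ S.filter (fun j => ag j = i), w l j
          = ∑ j ∈ S.filter (fun j => ag j ∈ NP), w l j := by
        have hmap : ∀ j ∈ S.filter (fun j => ag j ∈ NP), ag j ∈ NP :=
          fun j hj => (Finset.mem_filter.mp hj).2
        rw [← Finset.sum_fiberwise_of_maps_to hmap (fun j => w l j)]
        refine Finset.sum_congr rfl (fun i hi => ?_)
        congr 1
        rw [Finset.filter_filter]
        refine Finset.filter_congr (fun j _ => ?_)
        constructor
        · exact fun h => ⟨by rw [h]; exact hi, h⟩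
        · exact fun h => h.2
      calc ∑ i ∈ NP, (f S - f (S.filter (fun j => ag j ≠ i)))
          ≤ ∑ i ∈ NP, ∑ j ∈ S.filter (fun j => ag j = i), w l j :=
            Finset.sum_le_sum hterm
        _ = ∑ j ∈ S.filter (fun j => ag j ∈ NP), w l j := hfib
        _ ≤ f (S.filter (fun j => ag j ∈ NP)) := hub _ l
        _ ≤ f (S.filter (fun j => ag j ∈ N')) := by
            refine hmono _ _ (fun j hj => ?_)
            rw [Finset.mem_filter] at hj ⊢
            exact ⟨hj.1, (Finset.mem_filter.mp hj.2).1⟩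
    -- expected-cost bound from dropout stability
    have hcost : ∀ i ∈ NP,
        ∑ S : Finset V, D S * ∑ j ∈ S.filter (fun j => ag j = i), c j
          ≤ α i * ∑ S : Finset V, D S * (f S - f (S.filter (fun j => ag j ≠ i))) := by
      intro i hi
      have h := hstable i
      have e1 : ∑ S : Finset V, D S * (α i * f S - ∑ j ∈ S.filter (fun j => ag j = i), c j)
          = α i * (∑ S : Finset V, D S * f S)
            - ∑ S : Finset V, D S * ∑ j ∈ S.filter (fun j => ag j = i), c j := by
        rw [Finset.mul_sum, ← Finset.sum_sub_distrib]
        exact Finset.sum_congr rfl (fun S _ => by ring)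
      have e2 : ∑ S : Finset V, D S * (α i * f (S.filter (fun j => ag j ≠ i)))
          = α i * ∑ S : Finset V, D S * f (S.filter (fun j => ag j ≠ i)) := by
        rw [Finset.mul_sum]
        exact Finset.sum_congr rfl (fun S _ => by ring)
      have e3 : α i * ∑ S : Finset V, D S * (f S - f (S.filter (fun j => ag j ≠ i)))
          = α i * (∑ S : Finset V, D S * f S)
            - α i * ∑ S : Finset V, D S * f (S.filter (fun j => ag j ≠ i)) := by
        rw [← mul_sub, ← Finset.sum_sub_distrib]
        congr 1
        exact Finset.sum_congr rfl (fun S _ => by ring)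
      rw [e1, e2] at h
      rw [e3]
      linarith
    -- pointwise decomposition of the potential weights
    have hdsum : ∀ S : Finset V,
        ∑ j ∈ S.filter (fun j => ag j ∈ N' ∧ (α (ag j) ≠ 0 ∨ c j = 0)), d j
          = ∑ i ∈ NP, (∑ j ∈ S.filter (fun j => ag j = i), c j) / (γ * α i) := by
      intro S
      have stepA : ∑ j ∈ S.filter (fun j => ag j ∈ N' ∧ (α (ag j) ≠ 0 ∨ c j = 0)), d j
          = ∑ j ∈ S.filter (fun j => ag j ∈ NP), d j := by
        refine (Finset.sum_subset ?_ ?_).symm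
        · intro j hj
          rw [Finset.mem_filter] at hj ⊢
          have := Finset.mem_filter.mp hj.2
          exact ⟨hj.1, this.1, Or.inl this.2⟩
        · intro j hj hj'
          rw [Finset.mem_filter] at hj hj'
          simp only [hd_def]
          by_cases h0 : α (ag j) = 0
          · rw [if_pos h0]
          · exact absurd ⟨hj.1, Finset.mem_filter.mpr ⟨hj.2.1, h0⟩⟩ hj'
      have stepB : ∑ i ∈ NP, ∑ j ∈ S.filter (fun j => ag j = i), d j
          = ∑ j ∈ S.filter (fun j => ag j ∈ NP), d j := by
        have hmap : ∀ j ∈ S.filter (fun j => ag j ∈ NP), ag j ∈ NP :=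
          fun j hj => (Finset.mem_filter.mp hj).2
        rw [← Finset.sum_fiberwise_of_maps_to hmap d]
        refine Finset.sum_congr rfl (fun i hi => ?_)
        congr 1
        rw [Finset.filter_filter]
        refine Finset.filter_congr (fun j _ => ?_)
        constructor
        · exact fun h => ⟨by rw [h]; exact hi, h⟩
        · exact fun h => h.2
      rw [stepA, ← stepB]
      refine Finset.sum_congr rfl (fun i hi => ?_)
      have hai : α i ≠ 0 := (Finset.mem_filter.mp hi).2
      rw [Finset.sum_div]
      refine Finset.sum_congr rfl (fun j hj => ?_)
      have hji : ag j = i := (Finset.mem_filter.mp hj).2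
      simp only [hd_def]
      rw [hji, if_neg hai]
    -- expected potential-weight bound
    have hwt : ∑ S : Finset V,
        D S * ∑ j ∈ S.filter (fun j => ag j ∈ N' ∧ (α (ag j) ≠ 0 ∨ c j = 0)), d j
          ≤ (1/γ) * E := by
      have step1 : ∑ S : Finset V,
          D S * ∑ j ∈ S.filter (fun j => ag j ∈ N' ∧ (α (ag j) ≠ 0 ∨ c j = 0)), d j
          = ∑ i ∈ NP, (1 / (γ * α i))
              * ∑ S : Finset V, D S * ∑ j ∈ S.filter (fun j => ag j = i), c j := by
        calc ∑ S : Finset V,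
            D S * ∑ j ∈ S.filter (fun j => ag j ∈ N' ∧ (α (ag j) ≠ 0 ∨ c j = 0)), d j
            = ∑ S : Finset V, ∑ i ∈ NP,
                D S * ((∑ j ∈ S.filter (fun j => ag j = i), c j) / (γ * α i)) := by
              refine Finset.sum_congr rfl (fun S _ => ?_)
              rw [hdsum S, Finset.mul_sum]
          _ = ∑ i ∈ NP, ∑ S : Finset V,
                D S * ((∑ j ∈ S.filter (fun j => ag j = i), c j) / (γ * α i)) :=
              Finset.sum_comm
          _ = ∑ i ∈ NP, (1 / (γ * α i))
                * ∑ S : Finset V, D S * ∑ j ∈ S.filter (fun j => ag j = i), c j := by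
              refine Finset.sum_congr rfl (fun i _ => ?_)
              rw [Finset.mul_sum]
              exact Finset.sum_congr rfl (fun S _ => by ring)
      have step2 : ∑ i ∈ NP, (1 / (γ * α i))
              * ∑ S : Finset V, D S * ∑ j ∈ S.filter (fun j => ag j = i), c j
          ≤ ∑ i ∈ NP, (1/γ)
              * ∑ S : Finset V, D S * (f S - f (S.filter (fun j => ag j ≠ i))) := by
        refine Finset.sum_le_sum (fun i hi => ?_)
        have hai : α i ≠ 0 := (Finset.mem_filter.mp hi).2
        have hq : 0 < γ * α i := hapos i hai
        have h1 := hcost i hi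
        have h2 := mul_le_mul_of_nonneg_left h1 (le_of_lt (one_div_pos.mpr hq))
        calc (1 / (γ * α i)) * ∑ S : Finset V, D S * ∑ j ∈ S.filter (fun j => ag j = i), c j
            ≤ (1 / (γ * α i)) * (α i
                * ∑ S : Finset V, D S * (f S - f (S.filter (fun j => ag j ≠ i)))) := h2
          _ = (1/γ) * ∑ S : Finset V, D S * (f S - f (S.filter (fun j => ag j ≠ i))) := by
              rw [← mul_assoc]
              congr 1
              field_simp
      have step3 : ∑ i ∈ NP, (1/γ)
              * ∑ S : Finset V, D S * (f S - f (S.filter (fun j => ag j ≠ i)))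
          ≤ (1/γ) * E := by
        have e : ∑ i ∈ NP, (1/γ)
                * ∑ S : Finset V, D S * (f S - f (S.filter (fun j => ag j ≠ i)))
            = (1/γ) * ∑ S : Finset V,
                D S * ∑ i ∈ NP, (f S - f (S.filter (fun j => ag j ≠ i))) := by
          rw [← Finset.mul_sum]
          congr 1
          rw [Finset.sum_comm]
          exact Finset.sum_congr rfl (fun S _ => by rw [Finset.mul_sum])
        rw [e, hE]
        refine mul_le_mul_of_nonneg_left ?_ (by positivity)
        refine Finset.sum_le_sum (fun S _ => ?_)
        exact mul_le_mul_of_nonneg_left (hXOS S) (hD S)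
      calc ∑ S : Finset V,
          D S * ∑ j ∈ S.filter (fun j => ag j ∈ N' ∧ (α (ag j) ≠ 0 ∨ c j = 0)), d j
          = ∑ i ∈ NP, (1 / (γ * α i))
              * ∑ S : Finset V, D S * ∑ j ∈ S.filter (fun j => ag j = i), c j := step1
        _ ≤ ∑ i ∈ NP, (1/γ)
              * ∑ S : Finset V, D S * (f S - f (S.filter (fun j => ag j ≠ i))) := step2
        _ ≤ (1/γ) * E := step3
    -- the filtered set of each S in the support matches the N'-restriction
    have hfeq : ∑ S : Finset V,
        D S * f (S.filter (fun j => ag j ∈ N' ∧ (α (ag j) ≠ 0 ∨ c j = 0))) = E := by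
      rw [hE]
      refine Finset.sum_congr rfl (fun S _ => ?_)
      by_cases hDS : D S = 0
      · rw [hDS, zero_mul, zero_mul]
      · congr 2
        refine Finset.filter_congr (fun j hj => ?_)
        constructor
        · exact fun h => h.1
        · intro h
          refine ⟨h, ?_⟩
          by_cases h0 : α (ag j) = 0
          · exact Or.inr (hzero (ag j) h0 S hDS j hj rfl)
          · exact Or.inl h0
    -- maximality against each filtered set
    have hkey : ∀ S : Finset V,
        Φ (S.filter (fun j => ag j ∈ N' ∧ (α (ag j) ≠ 0 ∨ c j = 0))) ≤ Φ S' := by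
      intro S
      refine hS'max _ (Finset.mem_powerset.mpr (fun j hj => ?_))
      rw [Finset.mem_filter] at hj
      rw [hP_def, Finset.mem_filter]
      exact ⟨Finset.mem_univ j, hj.2⟩
    have hchain : (1 - 1/γ) * E ≤ Φ S' := by
      have h1 : ∑ S : Finset V,
          D S * Φ (S.filter (fun j => ag j ∈ N' ∧ (α (ag j) ≠ 0 ∨ c j = 0))) ≤ Φ S' := by
        calc ∑ S : Finset V,
            D S * Φ (S.filter (fun j => ag j ∈ N' ∧ (α (ag j) ≠ 0 ∨ c j = 0)))
            ≤ ∑ S : Finset V, D S * Φ S' :=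
              Finset.sum_le_sum (fun S _ =>
                mul_le_mul_of_nonneg_left (hkey S) (hD S))
          _ = Φ S' := by rw [← Finset.sum_mul, hDsum, one_mul]
      have h2 : ∑ S : Finset V,
          D S * Φ (S.filter (fun j => ag j ∈ N' ∧ (α (ag j) ≠ 0 ∨ c j = 0)))
          = ∑ S : Finset V,
              D S * f (S.filter (fun j => ag j ∈ N' ∧ (α (ag j) ≠ 0 ∨ c j = 0)))
            - ∑ S : Finset V,
              D S * ∑ j ∈ S.filter (fun j => ag j ∈ N' ∧ (α (ag j) ≠ 0 ∨ c j = 0)), d j := by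
        rw [← Finset.sum_sub_distrib]
        refine Finset.sum_congr rfl (fun S _ => ?_)
        simp only [hΦ_def]
        ring
      rw [h2, hfeq] at h1
      have h3 : E - (1/γ) * E ≤ Φ S' := le_trans (sub_le_sub_left hwt E) h1
      linarith [h3]
    have hfΦ : Φ S' ≤ f S' := by
      simp only [hΦ_def]
      have : 0 ≤ ∑ j ∈ S', d j := Finset.sum_nonneg (fun j _ => hd0 j)
      linarith
    rw [ge_iff_le]
    exact le_trans hchain hfΦ
end

section
/- Let f be XOS on finite A partitioned into A_1,...,A_n, let α ∈ [0,1]^n and let D be a dropout-stable distribution w.r.t. α. Then for any N' ⊆ {1,...,n}, E_{S∼D}[ f(⋃_{i∈N'} S_i) − ∑_{i∈N'} c(S_i)/α_i ] ≥ 0 (with c/0 := ∞ for c > 0, 0/0 := 0; the expression is finite on the support of D). -/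
open Finset

/-- For XOS `f` and a dropout-stable distribution `D` w.r.t. `α`,
for any subset of agents `N'`, `E_{S∼D}[f(⋃_{i∈N'} S_i) − ∑_{i∈N'} c(S_i)/α_i] ≥ 0`.
(Real division; dropout-stability forces `c(S_i) = 0` on the support whenever `α_i = 0`,
so the Lean convention `c/0 = 0` agrees with the paper's conventions here.) -/
theorem dropout_stable_expected_potential_nonneg (n k : ℕ) (V : Type*) [Fintype V] [DecidableEq V]
    (ag : V → Fin n) (f : Finset V → ℝ)
    (hf0 : f ∅ = 0)
    (hnn : ∀ S : Finset V, 0 ≤ f S)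
    (w : Fin k → V → ℝ)
    (hw : ∀ (l : Fin k) (j : V), 0 ≤ w l j)
    (hmax : ∀ S : Finset V, ∃ l : Fin k, f S = ∑ j ∈ S, w l j)
    (hub : ∀ (S : Finset V) (l : Fin k), ∑ j ∈ S, w l j ≤ f S)
    (c : V → ℝ) (hc : ∀ j, 0 ≤ c j)
    (α : Fin n → ℝ) (hα : ∀ i, 0 ≤ α i ∧ α i ≤ 1)
    (D : Finset V → ℝ) (hD : ∀ S, 0 ≤ D S) (hDsum : ∑ S : Finset V, D S = 1)
    (hstable : ∀ i : Fin n,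
      ∑ S : Finset V, D S * (α i * f S - ∑ j ∈ S.filter (fun j => ag j = i), c j)
        ≥ ∑ S : Finset V, D S * (α i * f (S.filter (fun j => ag j ≠ i)))) :
    ∀ N' : Finset (Fin n),
      0 ≤ ∑ S : Finset V, D S *
        (f (S.filter (fun j => ag j ∈ N'))
          - ∑ i ∈ N', (∑ j ∈ S.filter (fun j => ag j = i), c j) / α i) := by

  have hdiv : ∀ (a d x y : ℝ), a ≠ 0 → d*(x - y/a) = a⁻¹*(d*(a*x - y)) := by
    intro a d x y ha
    rw [div_eq_inv_mul, mul_sub d, mul_sub d, ← mul_assoc, ← mul_assoc, mul_sub]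
    congr 1
    · rw [mul_comm d a, mul_assoc a, inv_mul_cancel_left₀ ha]
    · ring
  -- monotonicity of f
  have hmono : ∀ T S : Finset V, T ⊆ S → f T ≤ f S := by
    intro T S hTS
    obtain ⟨l, hl⟩ := hmax T
    calc f T = ∑ j ∈ T, w l j := hl
      _ ≤ ∑ j ∈ S, w l j :=
          Finset.sum_le_sum_of_subset_of_nonneg hTS (fun j _ _ => hw l j)
      _ ≤ f S := hub S l
  intro N'
  -- pointwise key inequality
  have hkey : ∀ S : Finset V,
      ∑ i ∈ N', (f S - f (S.filter (fun j => ag j ≠ i)))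
        ≤ f (S.filter (fun j => ag j ∈ N')) := by
    intro S
    obtain ⟨l, hl⟩ := hmax S
    have h1 : ∀ i ∈ N', f S - f (S.filter (fun j => ag j ≠ i))
        ≤ ∑ j ∈ S.filter (fun j => ag j = i), w l j := by
      intro i _
      have hsplit : ∑ j ∈ S.filter (fun j => ag j = i), w l j
          + ∑ j ∈ S.filter (fun j => ag j ≠ i), w l j = ∑ j ∈ S, w l j :=
        Finset.sum_filter_add_sum_filter_not S _ _
      have h2 := hub (S.filter (fun j => ag j ≠ i)) l
      linarith [hl]
    have hfib : ∑ i ∈ N', ∑ j ∈ S.filter (fun j => ag j = i), w l j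
        = ∑ j ∈ S.filter (fun j => ag j ∈ N'), w l j := by
      have heq : ∀ i ∈ N', ∑ j ∈ S.filter (fun j => ag j = i), w l j
          = ∑ j ∈ (S.filter (fun j => ag j ∈ N')).filter (fun j => ag j = i), w l j := by
        intro i hi
        congr 1
        ext j
        simp only [Finset.mem_filter]
        constructor
        · rintro ⟨hjS, hji⟩
          exact ⟨⟨hjS, hji ▸ hi⟩, hji⟩
        · rintro ⟨⟨hjS, _⟩, hji⟩
          exact ⟨hjS, hji⟩
      rw [Finset.sum_congr rfl heq]
      exact Finset.sum_fiberwise_of_maps_to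
        (fun j hj => (Finset.mem_filter.mp hj).2) _
    calc ∑ i ∈ N', (f S - f (S.filter (fun j => ag j ≠ i)))
        ≤ ∑ i ∈ N', ∑ j ∈ S.filter (fun j => ag j = i), w l j := Finset.sum_le_sum h1
      _ = ∑ j ∈ S.filter (fun j => ag j ∈ N'), w l j := hfib
      _ ≤ f (S.filter (fun j => ag j ∈ N')) := hub _ l
  -- per-agent expected inequality
  have hterm : ∀ i ∈ N',
      0 ≤ ∑ S : Finset V, D S * (f S - f (S.filter (fun j => ag j ≠ i))
        - (∑ j ∈ S.filter (fun j => ag j = i), c j) / α i) := by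
    intro i _
    rcases eq_or_lt_of_le (hα i).1 with h0 | hpos
    · apply Finset.sum_nonneg
      intro S _
      apply mul_nonneg (hD S)
      rw [← h0, div_zero, sub_zero]
      linarith [hmono (S.filter (fun j => ag j ≠ i)) S (Finset.filter_subset _ S)]
    · have hst := hstable i
      have h1 : 0 ≤ ∑ S : Finset V,
          D S * (α i * (f S - f (S.filter (fun j => ag j ≠ i)))
            - ∑ j ∈ S.filter (fun j => ag j = i), c j) := by
        have h2 := sub_nonneg.mpr hst
        rw [← Finset.sum_sub_distrib] at h2
        refine le_of_le_of_eq h2 (Finset.sum_congr rfl fun S _ => ?_)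
        ring
      have h3 := mul_nonneg (le_of_lt (inv_pos.mpr hpos)) h1
      rw [Finset.mul_sum] at h3
      refine le_of_le_of_eq h3 (Finset.sum_congr rfl fun S _ => ?_)
      exact (hdiv (α i) (D S) _ _ (ne_of_gt hpos)).symm
  have hsum : 0 ≤ ∑ i ∈ N', ∑ S : Finset V,
      D S * (f S - f (S.filter (fun j => ag j ≠ i))
        - (∑ j ∈ S.filter (fun j => ag j = i), c j) / α i) :=
    Finset.sum_nonneg hterm
  rw [Finset.sum_comm] at hsum
  refine le_trans hsum (Finset.sum_le_sum fun S _ => ?_)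
  rw [← Finset.mul_sum, Finset.sum_sub_distrib]
  apply mul_le_mul_of_nonneg_left _ (hD S)
  have := hkey S
  linarith
end

section
/- Scaling-for-Robustness Lemma: Let f be monotone submodular on finite A partitioned into A_1,...,A_n, with additive costs c_j ≥ 0. Let ε > 0, γ > 1, α ∈ [0,1]^n, and let D be a dropout-stable distribution with respect to α. Then for every coarse-correlated equilibrium D† with respect to the contract γα + ε·(1,...,1): E_{S†∼D†}[f(S†)] ≥ (1/2)(1 − 1/γ) · E_{S∼D}[f(S)]. -/
open Finset

section Aux
variable {V : Type*} [DecidableEq V]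

private lemma marg (f : Finset V → ℝ)
    (hmono : ∀ S T : Finset V, S ⊆ T → f S ≤ f T)
    (hsub : ∀ S T : Finset V, f (S ∪ T) + f (S ∩ T) ≤ f S + f T)
    {X Y : Finset V} (Z : Finset V) (hXY : X ⊆ Y) :
    f (Y ∪ Z) - f Y ≤ f (X ∪ Z) - f X := by
  have h := hsub (X ∪ Z) Y
  have h1 : (X ∪ Z) ∪ Y = Y ∪ Z := by
    ext a
    simp only [Finset.mem_union]
    constructor
    · rintro ((h | h) | h)
      exacts [Or.inl (hXY h), Or.inr h, Or.inl h]
    · rintro (h | h)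
      exacts [Or.inr h, Or.inl (Or.inr h)]
  have h2 : f X ≤ f ((X ∪ Z) ∩ Y) :=
    hmono _ _ (Finset.subset_inter Finset.subset_union_left hXY)
  rw [h1] at h
  linarith

private lemma sumA {n : ℕ} (ag : V → Fin n) (f : Finset V → ℝ)
    (hmono : ∀ S T : Finset V, S ⊆ T → f S ≤ f T)
    (hsub : ∀ S T : Finset V, f (S ∪ T) + f (S ∩ T) ≤ f S + f T)
    (I : Finset (Fin n)) (X T : Finset V) :
    f (X ∪ T.filter (fun j => ag j ∈ I)) - f X
      ≤ ∑ i ∈ I, (f (X ∪ T.filter (fun j => ag j = i)) - f X) := by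
  classical
  induction I using Finset.induction_on with
  | empty => simp
  | insert a I' ha ih =>
    have hsplit : T.filter (fun j => ag j ∈ insert a I')
        = T.filter (fun j => ag j = a) ∪ T.filter (fun j => ag j ∈ I') := by
      ext j
      simp only [Finset.mem_filter, Finset.mem_union, Finset.mem_insert]
      tauto
    rw [Finset.sum_insert ha, hsplit]
    have h1 := marg f hmono hsub (T.filter (fun j => ag j ∈ I'))
      (Finset.subset_union_left : X ⊆ X ∪ T.filter (fun j => ag j = a))
    rw [Finset.union_assoc] at h1
    linarith

private lemma sumB {n : ℕ} (ag : V → Fin n) (f : Finset V → ℝ)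
    (hmono : ∀ S T : Finset V, S ⊆ T → f S ≤ f T)
    (hsub : ∀ S T : Finset V, f (S ∪ T) + f (S ∩ T) ≤ f S + f T)
    (I : Finset (Fin n)) (S : Finset V) :
    ∑ i ∈ I, (f S - f (S.filter (fun j => ag j ≠ i)))
      ≤ f S - f (S.filter (fun j => ag j ∉ I)) := by
  classical
  induction I using Finset.induction_on with
  | empty =>
    have : S.filter (fun j => ag j ∉ (∅ : Finset (Fin n))) = S :=
      Finset.filter_true_of_mem (fun j _ => Finset.notMem_empty _)
    simp [this]
  | insert a I' ha ih =>
    have hXsub : S.filter (fun j => ag j ∉ insert a I') ⊆ S.filter (fun j => ag j ≠ a) := by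
      intro j hj
      simp only [Finset.mem_filter, Finset.mem_insert] at *
      tauto
    have hcup1 : S.filter (fun j => ag j ∉ insert a I') ∪ S.filter (fun j => ag j = a)
        = S.filter (fun j => ag j ∉ I') := by
      ext j
      simp only [Finset.mem_filter, Finset.mem_union, Finset.mem_insert]
      constructor
      · rintro (⟨h1, h2⟩ | ⟨h1, h2⟩)
        · exact ⟨h1, fun hI => h2 (Or.inr hI)⟩
        · exact ⟨h1, h2 ▸ ha⟩
      · rintro ⟨h1, h2⟩
        by_cases h : ag j = a
        · exact Or.inr ⟨h1, h⟩
        · exact Or.inl ⟨h1, by tauto⟩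
    have hcup2 : S.filter (fun j => ag j ≠ a) ∪ S.filter (fun j => ag j = a) = S := by
      ext j; simp only [Finset.mem_filter, Finset.mem_union]; tauto
    have h1 := marg f hmono hsub (S.filter (fun j => ag j = a)) hXsub
    rw [hcup1, hcup2] at h1
    rw [Finset.sum_insert ha]
    linarith

end Aux

/-- Scaling-for-Robustness Lemma: For monotone submodular `f`, `ε > 0`,
`γ > 1`, a dropout-stable distribution `D` w.r.t. `α`, and any coarse-correlated
equilibrium `D†` of the contract `γα + ε𝟙`:
`E_{S†∼D†}[f(S†)] ≥ (1/2)(1 − 1/γ) E_{S∼D}[f(S)]`. -/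
theorem scaling_for_robustness (n : ℕ) (V : Type*) [Fintype V] [DecidableEq V]
    (ag : V → Fin n) (f : Finset V → ℝ)
    (hf0 : f ∅ = 0)
    (hnn : ∀ S : Finset V, 0 ≤ f S)
    (hmono : ∀ S T : Finset V, S ⊆ T → f S ≤ f T)
    (hsub : ∀ S T : Finset V, f (S ∪ T) + f (S ∩ T) ≤ f S + f T)
    (c : V → ℝ) (hc : ∀ j, 0 ≤ c j)
    (ε : ℝ) (hε : 0 < ε) (γ : ℝ) (hγ : 1 < γ)
    (α : Fin n → ℝ) (hα : ∀ i, 0 ≤ α i ∧ α i ≤ 1)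
    -- D, dropout-stable w.r.t. α
    (D : Finset V → ℝ) (hD : ∀ S, 0 ≤ D S) (hDsum : ∑ S : Finset V, D S = 1)
    (hstable : ∀ i : Fin n,
      ∑ S : Finset V, D S * (α i * f S - ∑ j ∈ S.filter (fun j => ag j = i), c j)
        ≥ ∑ S : Finset V, D S * (α i * f (S.filter (fun j => ag j ≠ i))))
    -- D†, a CCE w.r.t. γα + ε𝟙
    (D' : Finset V → ℝ) (hD' : ∀ S, 0 ≤ D' S) (hD'sum : ∑ S : Finset V, D' S = 1)
    (hCCE : ∀ i : Fin n, ∀ Ti ⊆ univ.filter (fun j => ag j = i),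
      ∑ S : Finset V, D' S *
          ((γ * α i + ε) * f S - ∑ j ∈ S.filter (fun j => ag j = i), c j)
        ≥ ∑ S : Finset V, D' S *
            ((γ * α i + ε) * f ((S.filter (fun j => ag j ≠ i)) ∪ Ti) - ∑ j ∈ Ti, c j)) :
    ∑ S : Finset V, D' S * f S ≥ (1/2) * (1 - 1/γ) * ∑ S : Finset V, D S * f S := by
  classical
  have hγ0 : (0:ℝ) < γ := by linarith
  set β : Fin n → ℝ := fun i => γ * α i + ε with hβdef
  have hβpos : ∀ i, 0 < β i := by
    intro i
    have h1 := (hα i).1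
    have h2 : (0:ℝ) ≤ γ * α i := mul_nonneg (le_of_lt hγ0) h1
    simp only [hβdef]
    linarith
  set P := ∑ S : Finset V, D S * f S with hP
  set P' := ∑ S : Finset V, D' S * f S with hP'
  set Q : Fin n → ℝ := fun i => ∑ S : Finset V, D S * f (S.filter (fun j => ag j ≠ i)) with hQ
  set Q' : Fin n → ℝ := fun i => ∑ S : Finset V, D' S * f (S.filter (fun j => ag j ≠ i)) with hQ'
  set G : Fin n → ℝ := fun i =>
    ∑ T : Finset V, D T * ∑ S : Finset V, D' S * f (S ∪ T.filter (fun j => ag j = i)) with hG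
  clear_value β P P' Q Q' G
  have hQle : ∀ i, Q i ≤ P := by
    intro i
    simp only [hQ, hP]
    exact Finset.sum_le_sum fun S _ =>
      mul_le_mul_of_nonneg_left (hmono _ _ (Finset.filter_subset _ _)) (hD S)
  have hQ'le : ∀ i, Q' i ≤ P' := by
    intro i
    simp only [hQ', hP']
    exact Finset.sum_le_sum fun S _ =>
      mul_le_mul_of_nonneg_left (hmono _ _ (Finset.filter_subset _ _)) (hD' S)
  -- cost bound from dropout stability
  have hC : ∀ i, (∑ S : Finset V, D S * ∑ j ∈ S.filter (fun j => ag j = i), c j)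
      ≤ α i * (P - Q i) := by
    intro i
    have h := hstable i
    have e1 : ∑ S : Finset V, D S * (α i * f S - ∑ j ∈ S.filter (fun j => ag j = i), c j)
        = α i * P - ∑ S : Finset V, D S * ∑ j ∈ S.filter (fun j => ag j = i), c j := by
      rw [hP, Finset.mul_sum, ← Finset.sum_sub_distrib]
      exact Finset.sum_congr rfl fun S _ => by ring
    have e2 : ∑ S : Finset V, D S * (α i * f (S.filter (fun j => ag j ≠ i))) = α i * Q i := by
      simp only [hQ]
      rw [Finset.mul_sum]
      exact Finset.sum_congr rfl fun S _ => by ring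
    rw [e1, e2] at h
    linarith
  have hPQnn : ∀ i, 0 ≤ P - Q i := fun i => by linarith [hQle i]
  -- key inequality for each agent
  have key : ∀ i, G i - (P' - Q' i) - (1/γ) * (P - Q i) ≤ P' := by
    intro i
    have hT : ∀ T : Finset V,
        β i * (∑ S : Finset V, D' S * f (S ∪ T.filter (fun j => ag j = i)))
          - β i * (P' - Q' i) - (∑ j ∈ T.filter (fun j => ag j = i), c j) ≤ β i * P' := by
      intro T
      have hsubTi : T.filter (fun j => ag j = i) ⊆ univ.filter (fun j => ag j = i) := by
        intro j hj
        simp only [Finset.mem_filter] at *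
        exact ⟨Finset.mem_univ j, hj.2⟩
      have h := hCCE i _ hsubTi
      have hL : ∑ S : Finset V, D' S *
          ((γ * α i + ε) * f S - ∑ j ∈ S.filter (fun j => ag j = i), c j) ≤ β i * P' := by
        rw [hP', Finset.mul_sum]
        refine Finset.sum_le_sum fun S _ => ?_
        have hc0 : 0 ≤ ∑ j ∈ S.filter (fun j => ag j = i), c j :=
          Finset.sum_nonneg fun j _ => hc j
        have e : β i * (D' S * f S) = D' S * ((γ * α i + ε) * f S) := by
          simp only [hβdef]; ring
        have h2 : D' S * ((γ * α i + ε) * f S - ∑ j ∈ S.filter (fun j => ag j = i), c j)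
            ≤ D' S * ((γ * α i + ε) * f S) :=
          mul_le_mul_of_nonneg_left (by linarith) (hD' S)
        linarith
      have hR : ∑ S : Finset V, D' S *
          ((γ * α i + ε) * f ((S.filter (fun j => ag j ≠ i)) ∪ T.filter (fun j => ag j = i))
            - ∑ j ∈ T.filter (fun j => ag j = i), c j)
          = β i * (∑ S : Finset V,
              D' S * f ((S.filter (fun j => ag j ≠ i)) ∪ T.filter (fun j => ag j = i)))
            - ∑ j ∈ T.filter (fun j => ag j = i), c j := by
        have e : ∀ S ∈ (univ : Finset (Finset V)), D' S *
            ((γ * α i + ε) * f ((S.filter (fun j => ag j ≠ i)) ∪ T.filter (fun j => ag j = i))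
              - ∑ j ∈ T.filter (fun j => ag j = i), c j)
            = β i * (D' S * f ((S.filter (fun j => ag j ≠ i)) ∪ T.filter (fun j => ag j = i)))
              - (∑ j ∈ T.filter (fun j => ag j = i), c j) * D' S := by
          intro S _
          simp only [hβdef]; ring
        rw [Finset.sum_congr rfl e, Finset.sum_sub_distrib, ← Finset.mul_sum, ← Finset.mul_sum,
          hD'sum, mul_one]
      have hpt : ∀ S : Finset V,
          f (S ∪ T.filter (fun j => ag j = i)) - (f S - f (S.filter (fun j => ag j ≠ i)))
            ≤ f ((S.filter (fun j => ag j ≠ i)) ∪ T.filter (fun j => ag j = i)) := by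
        intro S
        have := marg f hmono hsub (T.filter (fun j => ag j = i))
          (Finset.filter_subset (fun j => ag j ≠ i) S)
        linarith
      have hmid : (∑ S : Finset V, D' S * f (S ∪ T.filter (fun j => ag j = i))) - (P' - Q' i)
          ≤ ∑ S : Finset V,
              D' S * f ((S.filter (fun j => ag j ≠ i)) ∪ T.filter (fun j => ag j = i)) := by
        have e : (∑ S : Finset V, D' S * f (S ∪ T.filter (fun j => ag j = i))) - (P' - Q' i)
            = ∑ S : Finset V, D' S *
                (f (S ∪ T.filter (fun j => ag j = i))
                  - (f S - f (S.filter (fun j => ag j ≠ i)))) := by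
          simp only [hP', hQ']
          rw [← Finset.sum_sub_distrib, ← Finset.sum_sub_distrib]
          exact Finset.sum_congr rfl fun S _ => by ring
        rw [e]
        exact Finset.sum_le_sum fun S _ => mul_le_mul_of_nonneg_left (hpt S) (hD' S)
      have hmul := mul_le_mul_of_nonneg_left hmid (le_of_lt (hβpos i))
      rw [hR] at h
      linarith
    -- average over T ∼ D
    have havg : β i * (G i - (P' - Q' i))
        - (∑ T : Finset V, D T * ∑ j ∈ T.filter (fun j => ag j = i), c j) ≤ β i * P' := by
      have hstepT : ∀ T ∈ (univ : Finset (Finset V)),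
          D T * (β i * (∑ S : Finset V, D' S * f (S ∪ T.filter (fun j => ag j = i)))
            - β i * (P' - Q' i) - (∑ j ∈ T.filter (fun j => ag j = i), c j))
          ≤ D T * (β i * P') :=
        fun T _ => mul_le_mul_of_nonneg_left (hT T) (hD T)
      have hsum := Finset.sum_le_sum hstepT
      have eL : ∑ T : Finset V,
          D T * (β i * (∑ S : Finset V, D' S * f (S ∪ T.filter (fun j => ag j = i)))
            - β i * (P' - Q' i) - (∑ j ∈ T.filter (fun j => ag j = i), c j))
          = β i * G i - β i * (P' - Q' i)
            - ∑ T : Finset V, D T * ∑ j ∈ T.filter (fun j => ag j = i), c j := by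
        have e : ∀ T ∈ (univ : Finset (Finset V)),
            D T * (β i * (∑ S : Finset V, D' S * f (S ∪ T.filter (fun j => ag j = i)))
              - β i * (P' - Q' i) - (∑ j ∈ T.filter (fun j => ag j = i), c j))
            = β i * (D T * ∑ S : Finset V, D' S * f (S ∪ T.filter (fun j => ag j = i)))
              - (β i * (P' - Q' i)) * D T
              - D T * ∑ j ∈ T.filter (fun j => ag j = i), c j := by
          intro T _; ring
        simp only [hG]
        rw [Finset.sum_congr rfl e, Finset.sum_sub_distrib, Finset.sum_sub_distrib,
          ← Finset.mul_sum, ← Finset.mul_sum, hDsum, mul_one]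
      have eR : ∑ T : Finset V, D T * (β i * P') = β i * P' := by
        rw [← Finset.sum_mul, hDsum, one_mul]
      rw [eL, eR] at hsum
      linarith [hsum]
    have h2 : β i * (G i - (P' - Q' i)) - α i * (P - Q i) ≤ β i * P' := by
      have := hC i
      linarith
    have h3 : α i * (P - Q i) ≤ (β i * (1/γ)) * (P - Q i) := by
      apply mul_le_mul_of_nonneg_right _ (hPQnn i)
      have e : β i * (1/γ) = α i + ε / γ := by
        simp only [hβdef]
        field_simp
      rw [e]
      have : 0 ≤ ε / γ := le_of_lt (div_pos hε hγ0)
      linarith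
    have h4 : β i * (G i - (P' - Q' i) - (1/γ) * (P - Q i)) ≤ β i * P' := by
      have e : β i * (G i - (P' - Q' i) - (1/γ) * (P - Q i))
          = β i * (G i - (P' - Q' i)) - (β i * (1/γ)) * (P - Q i) := by ring
      rw [e]
      exact le_trans (sub_le_sub_left h3 _) h2
    exact le_of_mul_le_mul_left h4 (hβpos i)
  -- sum the key inequality over all agents
  have hsumkey : (∑ i : Fin n, G i) - (∑ i : Fin n, (P' - Q' i))
      - (1/γ) * (∑ i : Fin n, (P - Q i)) ≤ (n : ℝ) * P' := by
    have h := Finset.sum_le_sum fun i (_ : i ∈ (univ : Finset (Fin n))) => key i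
    have eL : ∑ i : Fin n, (G i - (P' - Q' i) - (1/γ) * (P - Q i))
        = (∑ i : Fin n, G i) - (∑ i : Fin n, (P' - Q' i))
          - (1/γ) * (∑ i : Fin n, (P - Q i)) := by
      rw [Finset.sum_sub_distrib, Finset.sum_sub_distrib, Finset.mul_sum]
    have eR : ∑ _i : Fin n, P' = (n : ℝ) * P' := by
      rw [Finset.sum_const, Finset.card_univ, Fintype.card_fin, nsmul_eq_mul]
    rw [eL, eR] at h
    exact h
  -- bound ∑ (P' - Q' i) ≤ P'
  have h4 : ∑ i : Fin n, (P' - Q' i) ≤ P' := by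
    have e : ∑ i : Fin n, (P' - Q' i)
        = ∑ S : Finset V, D' S * ∑ i : Fin n, (f S - f (S.filter (fun j => ag j ≠ i))) := by
      have e1 : ∀ i ∈ (univ : Finset (Fin n)), P' - Q' i
          = ∑ S : Finset V, (D' S * f S - D' S * f (S.filter (fun j => ag j ≠ i))) := by
        intro i _
        simp only [hP', hQ']
        rw [Finset.sum_sub_distrib]
      rw [Finset.sum_congr rfl e1, Finset.sum_comm]
      refine Finset.sum_congr rfl fun S _ => ?_
      rw [Finset.mul_sum]
      exact Finset.sum_congr rfl fun i _ => by ring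
    rw [e, hP']
    refine Finset.sum_le_sum fun S _ => mul_le_mul_of_nonneg_left ?_ (hD' S)
    have hB := sumB ag f hmono hsub (univ : Finset (Fin n)) S
    have hfix : S.filter (fun j => ag j ∉ (univ : Finset (Fin n))) = ∅ := by
      simp
    rw [hfix, hf0] at hB
    linarith
  -- bound ∑ (P - Q i) ≤ P
  have h5 : ∑ i : Fin n, (P - Q i) ≤ P := by
    have e : ∑ i : Fin n, (P - Q i)
        = ∑ S : Finset V, D S * ∑ i : Fin n, (f S - f (S.filter (fun j => ag j ≠ i))) := by
      have e1 : ∀ i ∈ (univ : Finset (Fin n)), P - Q i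
          = ∑ S : Finset V, (D S * f S - D S * f (S.filter (fun j => ag j ≠ i))) := by
        intro i _
        simp only [hP, hQ]
        rw [Finset.sum_sub_distrib]
      rw [Finset.sum_congr rfl e1, Finset.sum_comm]
      refine Finset.sum_congr rfl fun S _ => ?_
      rw [Finset.mul_sum]
      exact Finset.sum_congr rfl fun i _ => by ring
    rw [e, hP]
    refine Finset.sum_le_sum fun S _ => mul_le_mul_of_nonneg_left ?_ (hD S)
    have hB := sumB ag f hmono hsub (univ : Finset (Fin n)) S
    have hfix : S.filter (fun j => ag j ∉ (univ : Finset (Fin n))) = ∅ := by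
      simp
    rw [hfix, hf0] at hB
    linarith
  -- bound ∑ G i ≥ P + (n-1) P'
  have h6 : P + ((n : ℝ) - 1) * P' ≤ ∑ i : Fin n, G i := by
    have e : ∑ i : Fin n, G i
        = ∑ T : Finset V, D T * ∑ S : Finset V,
            D' S * ∑ i : Fin n, f (S ∪ T.filter (fun j => ag j = i)) := by
      simp only [hG]
      rw [Finset.sum_comm]
      refine Finset.sum_congr rfl fun T _ => ?_
      rw [← Finset.mul_sum]
      congr 1
      rw [Finset.sum_comm]
      exact Finset.sum_congr rfl fun S _ => (Finset.mul_sum _ _ _).symm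
    have hin : ∀ T S : Finset V,
        f (S ∪ T) + ((n : ℝ) - 1) * f S ≤ ∑ i : Fin n, f (S ∪ T.filter (fun j => ag j = i)) := by
      intro T S
      have hA := sumA ag f hmono hsub (univ : Finset (Fin n)) S T
      have hTfix : T.filter (fun j => ag j ∈ (univ : Finset (Fin n))) = T :=
        Finset.filter_true_of_mem fun j _ => Finset.mem_univ _
      rw [hTfix, Finset.sum_sub_distrib, Finset.sum_const, Finset.card_univ, Fintype.card_fin,
        nsmul_eq_mul] at hA
      linarith
    have hstep : ∀ T ∈ (univ : Finset (Finset V)),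
        D T * (f T + ((n : ℝ) - 1) * P')
          ≤ D T * ∑ S : Finset V, D' S * ∑ i : Fin n, f (S ∪ T.filter (fun j => ag j = i)) := by
      intro T _
      apply mul_le_mul_of_nonneg_left _ (hD T)
      have e2 : ∑ S : Finset V, D' S * (f T + ((n : ℝ) - 1) * f S)
          = f T + ((n : ℝ) - 1) * P' := by
        have e3 : ∀ S ∈ (univ : Finset (Finset V)),
            D' S * (f T + ((n : ℝ) - 1) * f S)
              = f T * D' S + ((n : ℝ) - 1) * (D' S * f S) := fun S _ => by ring
        rw [Finset.sum_congr rfl e3, Finset.sum_add_distrib, ← Finset.mul_sum, ← Finset.mul_sum,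
          hD'sum, mul_one, ← hP']
      rw [← e2]
      refine Finset.sum_le_sum fun S _ => mul_le_mul_of_nonneg_left ?_ (hD' S)
      have h1 := hin T S
      have h2 : f T ≤ f (S ∪ T) := hmono _ _ Finset.subset_union_right
      linarith
    have h := Finset.sum_le_sum hstep
    have e3 : ∑ T : Finset V, D T * (f T + ((n : ℝ) - 1) * P') = P + ((n : ℝ) - 1) * P' := by
      have e4 : ∀ T ∈ (univ : Finset (Finset V)),
          D T * (f T + ((n : ℝ) - 1) * P')
            = D T * f T + (((n : ℝ) - 1) * P') * D T := fun T _ => by ring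
      rw [Finset.sum_congr rfl e4, Finset.sum_add_distrib, ← Finset.mul_sum, hDsum, mul_one,
        ← hP]
    rw [e3] at h
    rw [e]
    exact h
  -- conclude
  have hinvγ : (0:ℝ) < 1/γ := by positivity
  have h7 : (1/γ) * (∑ i : Fin n, (P - Q i)) ≤ (1/γ) * P :=
    mul_le_mul_of_nonneg_left h5 (le_of_lt hinvγ)
  show P' ≥ 1/2 * (1 - 1/γ) * P
  linarith [hsumkey, h4, h6, h7]
end

section
/- For binary actions and supermodular monotone f: if a distribution D over subsets of [n] satisfies the dropout condition E_{S∼D}[α_i (f(S) − f(S \ {i})) − c_i 1[i ∈ S]] ≥ 0 for agent i, and S' = ⋃_{S ∈ supp(D)} S contains i, then α_i · f(i | S' \ {i}) ≥ c_i. -/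
open Finset
open scoped Classical

/-- Binary actions, supermodular monotone `f`. If `D` satisfies the dropout
condition for agent `i` and `i` belongs to the union `S'` of the support of `D`, then
`α_i · f(i | S' \ {i}) ≥ c_i`. -/
theorem supermodular_binary_dropout_marginal (n : ℕ) (f : Finset (Fin n) → ℝ)
    (hnn : ∀ S : Finset (Fin n), 0 ≤ f S)
    (hmono : ∀ S T : Finset (Fin n), S ⊆ T → f S ≤ f T)
    (hsuper : ∀ (S T : Finset (Fin n)) (j : Fin n), S ⊆ T → j ∉ T →
      f (insert j S) - f S ≤ f (insert j T) - f T)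
    (i : Fin n) (αi ci : ℝ) (hαi : 0 ≤ αi ∧ αi ≤ 1) (hci : 0 ≤ ci)
    (D : Finset (Fin n) → ℝ) (hD : ∀ S, 0 ≤ D S) (hDsum : ∑ S : Finset (Fin n), D S = 1)
    (hdrop : 0 ≤ ∑ S : Finset (Fin n),
      D S * (αi * (f S - f (S.erase i)) - (if i ∈ S then ci else 0)))
    (S' : Finset (Fin n))
    (hS' : S' = univ.filter (fun j => ∃ S : Finset (Fin n), D S ≠ 0 ∧ j ∈ S))
    (hiS' : i ∈ S') :
    ci ≤ αi * (f (insert i (S'.erase i)) - f (S'.erase i)) := by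

  obtain ⟨hα0, hα1⟩ := hαi
  set M := f (insert i (S'.erase i)) - f (S'.erase i) with hM
  have hiS'' := hiS'
  rw [hS', mem_filter] at hiS''
  obtain ⟨-, S0, hS0ne, hiS0⟩ := hiS''
  have hsub : ∀ S : Finset (Fin n), D S ≠ 0 → S ⊆ S' := by
    intro S hne j hj
    rw [hS', mem_filter]
    exact ⟨mem_univ j, S, hne, hj⟩
  have hkey : ∀ S : Finset (Fin n),
      D S * (αi * (f S - f (S.erase i)) - (if i ∈ S then ci else 0))
      ≤ D S * (if i ∈ S then αi * M - ci else 0) := by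
    intro S
    by_cases hne : D S = 0
    · simp [hne]
    by_cases hiS : i ∈ S
    · simp only [if_pos hiS]
      apply mul_le_mul_of_nonneg_left _ (hD S)
      have h1 : S.erase i ⊆ S'.erase i := erase_subset_erase _ (hsub S hne)
      have h2 : i ∉ S'.erase i := notMem_erase _ _
      have h3 := hsuper (S.erase i) (S'.erase i) i h1 h2
      rw [insert_erase hiS] at h3
      have h4 : αi * (f S - f (S.erase i)) ≤ αi * M :=
        mul_le_mul_of_nonneg_left h3 hα0
      linarith
    · simp [hiS, erase_eq_of_notMem hiS]
  have hsum : 0 ≤ ∑ S : Finset (Fin n), D S * (if i ∈ S then αi * M - ci else 0) :=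
    le_trans hdrop (Finset.sum_le_sum fun S _ => hkey S)
  have hsum2 : ∑ S : Finset (Fin n), D S * (if i ∈ S then αi * M - ci else 0)
      = (αi * M - ci) * ∑ S ∈ univ.filter (fun S => i ∈ S), D S := by
    rw [Finset.mul_sum, Finset.sum_filter]
    apply Finset.sum_congr rfl
    intro S _
    by_cases hiS : i ∈ S <;> simp [hiS, mul_comm]
  have hS0pos : 0 < D S0 := lt_of_le_of_ne (hD S0) (Ne.symm hS0ne)
  have hp : 0 < ∑ S ∈ univ.filter (fun S => i ∈ S), D S := by
    apply lt_of_lt_of_le hS0pos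
    apply Finset.single_le_sum (fun S _ => hD S)
    simp [hiS0]
  rw [hsum2] at hsum
  nlinarith
end

section
/- Supermodular local best-response lemma: In the multi-agent model with supermodular monotone f on finite A partitioned into A_1,...,A_n, let D be a correlated equilibrium of contract α, and let T = ⋃_{S ∈ supp(D)} S, T_i = T ∩ A_i. Fix agent i and any S_{-i} ⊆ A \ A_i with T \ A_i ⊆ S_{-i}. Then there exists S_i ⊆ A_i with T_i ⊆ S_i such that S_i ∈ argmax_{X_i ⊆ A_i} [α_i f(X_i ∪ S_{-i}) − c(X_i)]. -/
open Finset
open scoped Classical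

/-- Set-level supermodularity from element-level supermodularity. -/
private lemma super_union_aux {V : Type*} [DecidableEq V] (f : Finset V → ℝ)
    (hsuper : ∀ (S T : Finset V) (j : V), S ⊆ T → j ∉ T →
      f (insert j S) - f S ≤ f (insert j T) - f T) :
    ∀ (W U U' : Finset V), U ⊆ U' → Disjoint W U' →
      f (U ∪ W) - f U ≤ f (U' ∪ W) - f U' := by
  intro W
  induction W using Finset.induction_on with
  | empty => intro U U' _ _; simp
  | @insert j W hj ih =>
    intro U U' hUU' hdisj
    have hjU' : j ∉ U' := (Finset.disjoint_insert_left.mp hdisj).1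
    have hdW : Disjoint W U' := (Finset.disjoint_insert_left.mp hdisj).2
    have h1 := ih U U' hUU' hdW
    have h2 := hsuper (U ∪ W) (U' ∪ W) j
      (Finset.union_subset_union hUU' (Finset.Subset.refl W))
      (by simp [hjU', hj])
    have e1 : U ∪ insert j W = insert j (U ∪ W) := by simp [Finset.union_insert]
    have e2 : U' ∪ insert j W = insert j (U' ∪ W) := by simp [Finset.union_insert]
    rw [e1, e2]
    linarith

/-- Supermodular local best-response lemma: If `D` is a correlated
equilibrium of `α` with supermodular monotone `f`, `T` is the union of the support of `D`,
and agent `i` faces any profile `S_{-i}` of the others containing `T \ A_i`, then agent `i`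
has a best response containing `T_i`. -/
theorem supermodular_local_best_response (n : ℕ) (V : Type*) [Fintype V] [DecidableEq V]
    (ag : V → Fin n) (f : Finset V → ℝ)
    (hnn : ∀ S : Finset V, 0 ≤ f S)
    (hmono : ∀ S T : Finset V, S ⊆ T → f S ≤ f T)
    (hsuper : ∀ (S T : Finset V) (j : V), S ⊆ T → j ∉ T →
      f (insert j S) - f S ≤ f (insert j T) - f T)
    (c : V → ℝ) (hc : ∀ j, 0 ≤ c j)
    (α : Fin n → ℝ) (hα : ∀ i, 0 ≤ α i ∧ α i ≤ 1)
    (D : Finset V → ℝ) (hD : ∀ S, 0 ≤ D S) (hDsum : ∑ S : Finset V, D S = 1)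
    -- correlated equilibrium: no agent gains by any deviation map π_i
    (hCE : ∀ (i : Fin n) (π : Finset V → Finset V),
      (∀ X : Finset V, π X ⊆ univ.filter (fun j => ag j = i)) →
      ∑ S : Finset V, D S * (α i * f S - ∑ j ∈ S.filter (fun j => ag j = i), c j)
        ≥ ∑ S : Finset V, D S *
            (α i * f ((S.filter (fun j => ag j ≠ i)) ∪ π (S.filter (fun j => ag j = i)))
              - ∑ j ∈ π (S.filter (fun j => ag j = i)), c j))
    (T : Finset V)
    (hT : T = univ.filter (fun j => ∃ S : Finset V, D S ≠ 0 ∧ j ∈ S))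
    (i : Fin n) (Sm : Finset V)
    (hSm1 : ∀ j ∈ Sm, ag j ≠ i)
    (hSm2 : T.filter (fun j => ag j ≠ i) ⊆ Sm) :
    ∃ Si : Finset V, Si ⊆ univ.filter (fun j => ag j = i)
      ∧ T.filter (fun j => ag j = i) ⊆ Si
      ∧ ∀ Xi ⊆ univ.filter (fun j => ag j = i),
          α i * f (Xi ∪ Sm) - ∑ j ∈ Xi, c j ≤ α i * f (Si ∪ Sm) - ∑ j ∈ Si, c j := by
  classical
  set Ai : Finset V := univ.filter (fun j => ag j = i) with hAi
  set g : Finset V → ℝ := fun X => α i * f (X ∪ Sm) - ∑ j ∈ X, c j with hg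
  have hsub : ∀ S : Finset V, D S ≠ 0 → S ⊆ T := by
    intro S hS j hj
    rw [hT]
    simp only [Finset.mem_filter, Finset.mem_univ, true_and]
    exact ⟨S, hS, hj⟩
  -- choose a maximizer of g over subsets of Ai, of maximal cardinality
  obtain ⟨X₀, hX₀, hX₀max⟩ := Ai.powerset.exists_max_image g ⟨∅, by simp⟩
  set M : Finset (Finset V) :=
    Ai.powerset.filter (fun X => ∀ Y ∈ Ai.powerset, g Y ≤ g X) with hM
  have hMne : M.Nonempty := ⟨X₀, by simp only [hM, Finset.mem_filter]; exact ⟨hX₀, hX₀max⟩⟩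
  obtain ⟨X, hXM, hXcard⟩ := M.exists_max_image (fun Y => (Y.card : ℕ)) hMne
  have hXM' := Finset.mem_filter.mp hXM
  have hXP : X ⊆ Ai := Finset.mem_powerset.mp hXM'.1
  have hXopt : ∀ Y ⊆ Ai, g Y ≤ g X := fun Y hY =>
    hXM'.2 Y (Finset.mem_powerset.mpr hY)
  -- pointwise inequality for supported S
  have hpt : ∀ S : Finset V, D S ≠ 0 →
      (α i * f S - ∑ j ∈ S.filter (fun j => ag j = i), c j)
        - (α i * f ((S.filter (fun j => ag j ≠ i)) ∪ (S.filter (fun j => ag j = i) ∩ X))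
            - ∑ j ∈ S.filter (fun j => ag j = i) ∩ X, c j)
      ≤ g (X ∪ S.filter (fun j => ag j = i)) - g X := by
    intro S hS
    set Si := S.filter (fun j => ag j = i) with hSi
    set So := S.filter (fun j => ag j ≠ i) with hSo
    have hST := hsub S hS
    have hSoSm : So ⊆ Sm := by
      intro j hj
      rw [hSo, Finset.mem_filter] at hj
      exact hSm2 (Finset.mem_filter.mpr ⟨hST hj.1, hj.2⟩)
    have hU : So ∪ (Si ∩ X) ⊆ X ∪ Sm := by
      intro j hj
      rcases Finset.mem_union.mp hj with h | h
      · exact Finset.mem_union.mpr (Or.inr (hSoSm h))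
      · exact Finset.mem_union.mpr (Or.inl (Finset.mem_inter.mp h).2)
    have hdisj : Disjoint (Si \ X) (X ∪ Sm) := by
      rw [Finset.disjoint_left]
      intro j hj hj'
      have h1 := Finset.mem_sdiff.mp hj
      have h2 : ag j = i := (Finset.mem_filter.mp h1.1).2
      rcases Finset.mem_union.mp hj' with h | h
      · exact h1.2 h
      · exact hSm1 j h h2
    have hfs := super_union_aux f hsuper (Si \ X) (So ∪ (Si ∩ X)) (X ∪ Sm) hU hdisj
    have e1 : (So ∪ (Si ∩ X)) ∪ (Si \ X) = S := by
      ext j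
      simp only [hSo, hSi, Finset.mem_union, Finset.mem_inter, Finset.mem_sdiff,
        Finset.mem_filter]
      tauto
    have e2 : (X ∪ Sm) ∪ (Si \ X) = (X ∪ Si) ∪ Sm := by
      ext j
      simp only [Finset.mem_union, Finset.mem_sdiff]
      tauto
    rw [e1, e2] at hfs
    have hα0 : 0 ≤ α i := (hα i).1
    have hc1 : ∑ j ∈ Si ∩ X, c j + ∑ j ∈ Si \ X, c j = ∑ j ∈ Si, c j :=
      Finset.sum_inter_add_sum_sdiff Si X c
    have hc2 : ∑ j ∈ X ∪ Si, c j = ∑ j ∈ X, c j + ∑ j ∈ Si \ X, c j := by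
      rw [← Finset.union_sdiff_self_eq_union,
        Finset.sum_union (Finset.disjoint_sdiff)]
    have hmul := mul_le_mul_of_nonneg_left hfs hα0
    rw [mul_sub, mul_sub] at hmul
    simp only [hg]
    linarith
  -- apply CE with π(X') = X' ∩ X
  have hπ : ∀ X' : Finset V, X' ∩ X ⊆ Ai := fun X' =>
    Finset.Subset.trans (Finset.inter_subset_right) hXP
  have hce := hCE i (fun X' => X' ∩ X) hπ
  have hsum2 : 0 ≤ ∑ S : Finset V, D S * (g (X ∪ S.filter (fun j => ag j = i)) - g X) := by
    have h0 : 0 ≤ ∑ S : Finset V,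
        (D S * (α i * f S - ∑ j ∈ S.filter (fun j => ag j = i), c j)
          - D S * (α i * f ((S.filter (fun j => ag j ≠ i)) ∪ ((S.filter (fun j => ag j = i)) ∩ X))
              - ∑ j ∈ (S.filter (fun j => ag j = i)) ∩ X, c j)) := by
      rw [Finset.sum_sub_distrib]
      exact sub_nonneg.mpr hce
    refine le_trans h0 (Finset.sum_le_sum ?_)
    intro S _
    rcases eq_or_ne (D S) 0 with h | h
    · simp [h]
    · rw [← mul_sub]
      exact mul_le_mul_of_nonneg_left (hpt S h) (hD S)
  have hfil : ∀ S : Finset V, S.filter (fun j => ag j = i) ⊆ Ai := by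
    intro S j hj
    rw [hAi, Finset.mem_filter]
    exact ⟨Finset.mem_univ j, (Finset.mem_filter.mp hj).2⟩
  have hterm : ∀ S : Finset V, D S * (g (X ∪ S.filter (fun j => ag j = i)) - g X) ≤ 0 := by
    intro S
    apply mul_nonpos_of_nonneg_of_nonpos (hD S)
    rw [sub_nonpos]
    exact hXopt _ (Finset.union_subset hXP (hfil S))
  have hzero : ∀ S : Finset V, D S * (g (X ∪ S.filter (fun j => ag j = i)) - g X) = 0 := by
    have hsum0 : ∑ S : Finset V, D S * (g (X ∪ S.filter (fun j => ag j = i)) - g X) = 0 :=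
      le_antisymm (Finset.sum_nonpos (fun S _ => hterm S)) hsum2
    intro S
    exact (Finset.sum_eq_zero_iff_of_nonpos (fun S _ => hterm S)).mp hsum0 S (Finset.mem_univ S)
  have hSiX : ∀ S : Finset V, D S ≠ 0 → S.filter (fun j => ag j = i) ⊆ X := by
    intro S hS
    have hgeq : g (X ∪ S.filter (fun j => ag j = i)) = g X := by
      have := hzero S
      rcases mul_eq_zero.mp this with h | h
      · exact absurd h hS
      · linarith [sub_eq_zero.mp h]
    have hmem : X ∪ S.filter (fun j => ag j = i) ∈ M := by
      rw [hM, Finset.mem_filter]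
      refine ⟨Finset.mem_powerset.mpr (Finset.union_subset hXP (hfil S)), ?_⟩
      intro Y hY
      rw [hgeq]
      exact hXM'.2 Y hY
    have hcard := hXcard _ hmem
    have heq : X = X ∪ S.filter (fun j => ag j = i) :=
      Finset.eq_of_subset_of_card_le (Finset.subset_union_left) hcard
    intro j hj
    rw [heq]
    exact Finset.mem_union.mpr (Or.inr hj)
  refine ⟨X, hXP, ?_, ?_⟩
  · intro j hj
    have hj' := Finset.mem_filter.mp hj
    have : ∃ S : Finset V, D S ≠ 0 ∧ j ∈ S := by
      have := hj'.1
      rw [hT, Finset.mem_filter] at this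
      exact this.2
    obtain ⟨S, hS, hjS⟩ := this
    exact hSiX S hS (Finset.mem_filter.mpr ⟨hjS, hj'.2⟩)
  · intro Xi hXi
    have := hXopt Xi hXi
    simpa [hg] using this
end

section
/- Any set function f on ground set A = {x,y} ∪ B (B finite, disjoint from {x,y}) satisfying, for all T ≠ ∅, 2 + 2·1[|T ∩ {x,y}| ≥ 1] + 1[|T ∩ {x,y}| ≥ 2] + |T ∩ B|/√n ≤ f(T) ≤ 4 + 2·1[|T ∩ {x,y}| ≥ 1] + 1[|T ∩ {x,y}| ≥ 2] + |T ∩ B|/√n (with f(∅) = 0 and n ≥ 1) is subadditive. -/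
open Finset

/-- Any set function on `{x,y} ∪ B` sandwiched (on nonempty subsets of the
ground set) between `2 + 2·1[k≥1] + 1[k≥2] + |T∩B|/√n` and `4 + 2·1[k≥1] + 1[k≥2] + |T∩B|/√n`,
where `k = |T ∩ {x,y}|`, and with `f(∅) = 0`, is subadditive on subsets of the ground set. -/
theorem sandwich_subadditive (V : Type*) [DecidableEq V] (x y : V) (hxy : x ≠ y)
    (B : Finset V) (hx : x ∉ B) (hy : y ∉ B)
    (n : ℕ) (hn : 1 ≤ n)
    (f : Finset V → ℝ) (hf0 : f ∅ = 0)
    (hlow : ∀ T ⊆ insert x (insert y B), T ≠ ∅ →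
      2 + 2 * (if 1 ≤ (T ∩ ({x, y} : Finset V)).card then (1:ℝ) else 0)
        + (if 2 ≤ (T ∩ ({x, y} : Finset V)).card then (1:ℝ) else 0)
        + ((T ∩ B).card : ℝ) / Real.sqrt n ≤ f T)
    (hhigh : ∀ T ⊆ insert x (insert y B), T ≠ ∅ →
      f T ≤ 4 + 2 * (if 1 ≤ (T ∩ ({x, y} : Finset V)).card then (1:ℝ) else 0)
        + (if 2 ≤ (T ∩ ({x, y} : Finset V)).card then (1:ℝ) else 0)
        + ((T ∩ B).card : ℝ) / Real.sqrt n) :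
    ∀ S ⊆ insert x (insert y B), ∀ T ⊆ insert x (insert y B),
      f (S ∪ T) ≤ f S + f T := by
  intro S hS T hT
  rcases S.eq_empty_or_nonempty with rfl | hSne
  · simp [hf0]
  rcases T.eq_empty_or_nonempty with rfl | hTne
  · simp [hf0]
  have hU : S ∪ T ⊆ insert x (insert y B) := union_subset hS hT
  have h1 := hhigh (S ∪ T) hU (by simp [Finset.union_eq_empty, hSne.ne_empty])
  have h2 := hlow S hS hSne.ne_empty
  have h3 := hlow T hT hTne.ne_empty
  have hk : ((S ∪ T) ∩ ({x, y} : Finset V)).card ≤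
      (S ∩ ({x, y} : Finset V)).card + (T ∩ ({x, y} : Finset V)).card := by
    rw [Finset.union_inter_distrib_right]
    exact Finset.card_union_le _ _
  have hs : (0:ℝ) < Real.sqrt n := Real.sqrt_pos.mpr (by exact_mod_cast hn)
  have hcB : (((S ∪ T) ∩ B).card : ℝ) / Real.sqrt n ≤
      ((S ∩ B).card : ℝ) / Real.sqrt n + ((T ∩ B).card : ℝ) / Real.sqrt n := by
    rw [← add_div]
    have : (((S ∪ T) ∩ B).card : ℝ) ≤ ((S ∩ B).card : ℝ) + ((T ∩ B).card : ℝ) := by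
      rw [Finset.union_inter_distrib_right]
      exact_mod_cast Finset.card_union_le _ _
    gcongr
  have hind : 2 * (if 1 ≤ ((S ∪ T) ∩ ({x, y} : Finset V)).card then (1:ℝ) else 0)
      + (if 2 ≤ ((S ∪ T) ∩ ({x, y} : Finset V)).card then (1:ℝ) else 0) ≤
      2 * (if 1 ≤ (S ∩ ({x, y} : Finset V)).card then (1:ℝ) else 0)
      + (if 2 ≤ (S ∩ ({x, y} : Finset V)).card then (1:ℝ) else 0)
      + (2 * (if 1 ≤ (T ∩ ({x, y} : Finset V)).card then (1:ℝ) else 0)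
      + (if 2 ≤ (T ∩ ({x, y} : Finset V)).card then (1:ℝ) else 0)) := by
    split_ifs <;> norm_num <;> omega
  linarith
end

section
/- Let D be a coarse-correlated equilibrium of contract α* in the multi-agent combinatorial contract model with monotone subadditive f. Suppose agent i satisfies the dropout condition, and let α_i ∈ (α*_i, 1]. If S = (S_i, ∅,...,∅) is a pure Nash equilibrium of the contract that pays α_i to agent i and 0 to the others, then (α_i − α*_i) f(S_i) ≥ (α_i − α*_i) E_{S*∼D}[f(S*_i)] − α*_i E_{S*∼D}[f(S*_{-i})]. -/
open Finset

/-- Let `D` be a CCE of `α*` (monotone subadditive `f`), suppose agent `i`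
satisfies the dropout condition, and let `α_i ∈ (α*_i, 1]`. If `S_i` (together with all
other agents taking no action) is a PNE of the contract paying `α_i` to agent `i` and `0`
to the others, then
`(α_i − α*_i) f(S_i) ≥ (α_i − α*_i) E[f(S*_i)] − α*_i E[f(S*_{-i})]`. -/
theorem single_agent_scaled_pne_bound (n : ℕ) (V : Type*) [Fintype V] [DecidableEq V]
    (ag : V → Fin n) (f : Finset V → ℝ)
    (hf0 : f ∅ = 0)
    (hnn : ∀ S : Finset V, 0 ≤ f S)
    (hmono : ∀ S T : Finset V, S ⊆ T → f S ≤ f T)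
    (hsubadd : ∀ S T : Finset V, f (S ∪ T) ≤ f S + f T)
    (c : V → ℝ) (hc : ∀ j, 0 ≤ c j)
    (αs : Fin n → ℝ) (hαs : ∀ i', 0 ≤ αs i' ∧ αs i' ≤ 1)
    (D : Finset V → ℝ) (hD : ∀ S, 0 ≤ D S) (hDsum : ∑ S : Finset V, D S = 1)
    -- D is a CCE of α*
    (hCCE : ∀ i' : Fin n, ∀ Ti ⊆ univ.filter (fun j => ag j = i'),
      ∑ S : Finset V, D S * (αs i' * f S - ∑ j ∈ S.filter (fun j => ag j = i'), c j)
        ≥ ∑ S : Finset V, D S *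
            (αs i' * f ((S.filter (fun j => ag j ≠ i')) ∪ Ti) - ∑ j ∈ Ti, c j))
    (i : Fin n)
    -- dropout condition for agent i
    (hdrop : ∑ S : Finset V, D S * (αs i * f S - ∑ j ∈ S.filter (fun j => ag j = i), c j)
      ≥ ∑ S : Finset V, D S * (αs i * f (S.filter (fun j => ag j ≠ i))))
    (αi : ℝ) (hαi : αs i < αi ∧ αi ≤ 1)
    (Si : Finset V) (hSi : ∀ j ∈ Si, ag j = i)
    -- PNE condition for agent i under the single-agent contract (others take no action)
    (hPNE : ∀ T ⊆ univ.filter (fun j => ag j = i),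
      αi * f Si - ∑ j ∈ Si, c j ≥ αi * f T - ∑ j ∈ T, c j) :
    (αi - αs i) * f Si
      ≥ (αi - αs i) * (∑ S : Finset V, D S * f (S.filter (fun j => ag j = i)))
        - αs i * (∑ S : Finset V, D S * f (S.filter (fun j => ag j ≠ i))) := by

  have hα : 0 ≤ αs i := (hαs i).1
  have hSisub : Si ⊆ univ.filter (fun j => ag j = i) := by
    intro j hj; simp [hSi j hj]
  set A := ∑ S : Finset V, D S * f (S.filter (fun j => ag j = i)) with hA
  set B := ∑ S : Finset V, D S * f (S.filter (fun j => ag j ≠ i)) with hB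
  set C := ∑ S : Finset V, D S * (∑ j ∈ S.filter (fun j => ag j = i), c j) with hC
  have hsplit : αs i * A + αs i * B - C
      = ∑ S : Finset V, D S * (αs i * (f (S.filter (fun j => ag j = i))
          + f (S.filter (fun j => ag j ≠ i))) - ∑ j ∈ S.filter (fun j => ag j = i), c j) := by
    rw [hA, hB, hC, Finset.mul_sum, Finset.mul_sum, ← Finset.sum_add_distrib,
      ← Finset.sum_sub_distrib]
    exact Finset.sum_congr rfl (fun S _ => by ring)
  have key1 : αs i * A + αs i * B - C ≥ αs i * f Si - ∑ j ∈ Si, c j := by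
    have h1 := hCCE i Si hSisub
    have hL : ∑ S : Finset V, D S * (αs i * f S - ∑ j ∈ S.filter (fun j => ag j = i), c j)
        ≤ αs i * A + αs i * B - C := by
      rw [hsplit]
      apply Finset.sum_le_sum
      intro S _
      apply mul_le_mul_of_nonneg_left _ (hD S)
      have hfs : f S ≤ f (S.filter (fun j => ag j = i)) + f (S.filter (fun j => ag j ≠ i)) := by
        have h := hsubadd (S.filter (fun j => ag j = i)) (S.filter (fun j => ag j ≠ i))
        rwa [Finset.filter_union_filter_not_eq] at h
      have := mul_le_mul_of_nonneg_left hfs hα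
      linarith
    have hR : ∑ S : Finset V, D S *
        (αs i * f ((S.filter (fun j => ag j ≠ i)) ∪ Si) - ∑ j ∈ Si, c j)
        ≥ αs i * f Si - ∑ j ∈ Si, c j := by
      have hconst : ∑ S : Finset V, D S * (αs i * f Si - ∑ j ∈ Si, c j)
          = αs i * f Si - ∑ j ∈ Si, c j := by
        rw [← Finset.sum_mul, hDsum, one_mul]
      rw [ge_iff_le, ← hconst]
      apply Finset.sum_le_sum
      intro S _
      apply mul_le_mul_of_nonneg_left _ (hD S)
      have h := hmono Si (S.filter (fun j => ag j ≠ i) ∪ Si) Finset.subset_union_right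
      have := mul_le_mul_of_nonneg_left h hα
      linarith
    linarith
  have key2 : αi * f Si - ∑ j ∈ Si, c j ≥ αi * A - C := by
    have hconst : ∑ S : Finset V, D S * (αi * f Si - ∑ j ∈ Si, c j)
        = αi * f Si - ∑ j ∈ Si, c j := by
      rw [← Finset.sum_mul, hDsum, one_mul]
    have hsum : ∑ S : Finset V, D S * (αi * f (S.filter (fun j => ag j = i))
        - ∑ j ∈ S.filter (fun j => ag j = i), c j) = αi * A - C := by
      rw [hA, hC, Finset.mul_sum, ← Finset.sum_sub_distrib]
      exact Finset.sum_congr rfl (fun S _ => by ring)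
    rw [ge_iff_le, ← hconst, ← hsum]
    apply Finset.sum_le_sum
    intro S _
    apply mul_le_mul_of_nonneg_left _ (hD S)
    exact hPNE _ (by intro j hj; simp only [Finset.mem_filter] at hj ⊢; exact ⟨Finset.mem_univ j, hj.2⟩)
  linarith
end

section
/- Subadditive single-agent scaling lemma: Let f be monotone subadditive on finite A partitioned into A_1,...,A_n, let D be a dropout-stable distribution with respect to α, fix an agent i and γ > 1, and define α' by α'_i = γα_i, α'_{i'} = 0 for i' ≠ i. Then there exists a pure Nash equilibrium S' with respect to α' satisfying f(S') ≥ (1 − 1/γ) E_{S∼D}[f(S_i)]. -/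
open Finset

lemma pne_aux {n : ℕ} {V : Type*} [Fintype V] [DecidableEq V] (ag : V → Fin n)
    (f : Finset V → ℝ) (c : V → ℝ) (hc : ∀ j, 0 ≤ c j)
    (i : Fin n) (α' : Fin n → ℝ) (hzero : ∀ i', i' ≠ i → α' i' = 0)
    (S' : Finset V) (hS'B : ∀ j ∈ S', ag j = i)
    (hmax : ∀ Ti ⊆ univ.filter (fun j => ag j = i),
      α' i * f S' - ∑ j ∈ S', c j ≥ α' i * f Ti - ∑ j ∈ Ti, c j) :
    ∀ i' : Fin n, ∀ Ti ⊆ univ.filter (fun j => ag j = i'),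
      α' i' * f ((S'.filter (fun j => ag j ≠ i')) ∪ (S'.filter (fun j => ag j = i')))
          - ∑ j ∈ S'.filter (fun j => ag j = i'), c j
        ≥ α' i' * f ((S'.filter (fun j => ag j ≠ i')) ∪ Ti) - ∑ j ∈ Ti, c j := by
  intro i' Ti hTi
  by_cases h : i' = i
  · subst h
    have h1 : S'.filter (fun j => ag j ≠ i') = ∅ := by
      rw [Finset.filter_eq_empty_iff]
      intro j hj
      simp [hS'B j hj]
    have h2 : S'.filter (fun j => ag j = i') = S' := by
      rw [Finset.filter_eq_self]
      exact hS'B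
    rw [h1, h2, Finset.empty_union, Finset.empty_union]
    exact hmax Ti hTi
  · have hz := hzero i' h
    have h2 : S'.filter (fun j => ag j = i') = ∅ := by
      rw [Finset.filter_eq_empty_iff]
      intro j hj
      simp [hS'B j hj, Ne.symm h]
    rw [hz, h2]
    simp only [zero_mul, zero_sub, Finset.sum_empty, neg_zero]
    have : 0 ≤ ∑ j ∈ Ti, c j := Finset.sum_nonneg fun j _ => hc j
    linarith

/-- Subadditive single-agent scaling lemma: For monotone subadditive `f`,
a dropout-stable distribution `D` w.r.t. `α`, an agent `i` and `γ > 1`, the contract `α'`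
with `α'_i = γ α_i` and `α'_{i'} = 0` for `i' ≠ i` admits a pure Nash equilibrium `S'`
with `f(S') ≥ (1 − 1/γ) E_{S∼D}[f(S_i)]`. -/
theorem subadditive_single_agent_scaling (n : ℕ) (V : Type*) [Fintype V] [DecidableEq V]
    (ag : V → Fin n) (f : Finset V → ℝ)
    (hf0 : f ∅ = 0)
    (hnn : ∀ S : Finset V, 0 ≤ f S)
    (hmono : ∀ S T : Finset V, S ⊆ T → f S ≤ f T)
    (hsubadd : ∀ S T : Finset V, f (S ∪ T) ≤ f S + f T)
    (c : V → ℝ) (hc : ∀ j, 0 ≤ c j)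
    (α : Fin n → ℝ) (hα : ∀ i', 0 ≤ α i' ∧ α i' ≤ 1)
    (D : Finset V → ℝ) (hD : ∀ S, 0 ≤ D S) (hDsum : ∑ S : Finset V, D S = 1)
    (hstable : ∀ i' : Fin n,
      ∑ S : Finset V, D S * (α i' * f S - ∑ j ∈ S.filter (fun j => ag j = i'), c j)
        ≥ ∑ S : Finset V, D S * (α i' * f (S.filter (fun j => ag j ≠ i'))))
    (i : Fin n) (γ : ℝ) (hγ : 1 < γ)
    (α' : Fin n → ℝ) (hα' : ∀ i', α' i' = if i' = i then γ * α i else 0) :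
    ∃ S' : Finset V,
      (∀ i' : Fin n, ∀ Ti ⊆ univ.filter (fun j => ag j = i'),
        α' i' * f ((S'.filter (fun j => ag j ≠ i')) ∪ (S'.filter (fun j => ag j = i')))
            - ∑ j ∈ S'.filter (fun j => ag j = i'), c j
          ≥ α' i' * f ((S'.filter (fun j => ag j ≠ i')) ∪ Ti) - ∑ j ∈ Ti, c j)
      ∧ f S' ≥ (1 - 1/γ) * ∑ S : Finset V, D S * f (S.filter (fun j => ag j = i)) := by
  classical
  have hγ0 : (0:ℝ) < γ := lt_trans one_pos hγ
  have hαi := hα i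
  have hα'i : α' i = γ * α i := by rw [hα' i, if_pos rfl]
  have hzero : ∀ i', i' ≠ i → α' i' = 0 := fun i' h => by rw [hα' i', if_neg h]
  set E : ℝ := ∑ S : Finset V, D S * f (S.filter (fun j => ag j = i)) with hE
  have hEnn : 0 ≤ E :=
    Finset.sum_nonneg fun S _ => mul_nonneg (hD S) (hnn _)
  -- key fact: expected cost of S_i is at most α_i * E
  have hsplit : ∀ S : Finset V,
      f S ≤ f (S.filter (fun j => ag j ≠ i)) + f (S.filter (fun j => ag j = i)) := by
    intro S
    have hU : S.filter (fun j => ag j ≠ i) ∪ S.filter (fun j => ag j = i) = S := by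
      rw [Finset.union_comm, Finset.filter_union_filter_not_eq]
    calc f S = f (S.filter (fun j => ag j ≠ i) ∪ S.filter (fun j => ag j = i)) := by rw [hU]
      _ ≤ _ := hsubadd _ _
  have hcost : ∑ S : Finset V, D S * (∑ j ∈ S.filter (fun j => ag j = i), c j) ≤ α i * E := by
    have h1 := hstable i
    have h2 : ∑ S : Finset V, D S * (α i * f S - ∑ j ∈ S.filter (fun j => ag j = i), c j)
        ≤ ∑ S : Finset V, D S * (α i * f (S.filter (fun j => ag j ≠ i))
            + (α i * f (S.filter (fun j => ag j = i))
              - ∑ j ∈ S.filter (fun j => ag j = i), c j)) := by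
      apply Finset.sum_le_sum
      intro S _
      apply mul_le_mul_of_nonneg_left _ (hD S)
      have := hsplit S
      nlinarith [hαi.1]
    rw [hE, Finset.mul_sum]
    have h3 : ∑ S : Finset V, D S * (α i * f (S.filter (fun j => ag j ≠ i))
            + (α i * f (S.filter (fun j => ag j = i))
              - ∑ j ∈ S.filter (fun j => ag j = i), c j))
        = ∑ S : Finset V, D S * (α i * f (S.filter (fun j => ag j ≠ i)))
          + ∑ S : Finset V, D S * (α i * f (S.filter (fun j => ag j = i))
              - ∑ j ∈ S.filter (fun j => ag j = i), c j) := by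
      rw [← Finset.sum_add_distrib]
      congr 1; ext S; ring
    -- combine
    have h4 : ∑ S : Finset V, D S * (∑ j ∈ S.filter (fun j => ag j = i), c j)
        ≤ ∑ S : Finset V, D S * (α i * f (S.filter (fun j => ag j = i))) := by
      have e1 : ∑ S : Finset V, D S * (α i * f S - ∑ j ∈ S.filter (fun j => ag j = i), c j)
          = ∑ S : Finset V, D S * (α i * f S)
            - ∑ S : Finset V, D S * (∑ j ∈ S.filter (fun j => ag j = i), c j) := by
        rw [← Finset.sum_sub_distrib]; congr 1; ext S; ring
      have e2 : ∑ S : Finset V, D S * (α i * f S)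
          ≤ ∑ S : Finset V, D S * (α i * f (S.filter (fun j => ag j ≠ i))
            + α i * f (S.filter (fun j => ag j = i))) := by
        apply Finset.sum_le_sum
        intro S _
        apply mul_le_mul_of_nonneg_left _ (hD S)
        nlinarith [hsplit S, hαi.1]
      have e3 : ∑ S : Finset V, D S * (α i * f (S.filter (fun j => ag j ≠ i))
            + α i * f (S.filter (fun j => ag j = i)))
          = ∑ S : Finset V, D S * (α i * f (S.filter (fun j => ag j ≠ i)))
            + ∑ S : Finset V, D S * (α i * f (S.filter (fun j => ag j = i))) := by
        rw [← Finset.sum_add_distrib]; congr 1; ext S; ring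
      linarith [h1]
    calc ∑ S : Finset V, D S * (∑ j ∈ S.filter (fun j => ag j = i), c j)
        ≤ ∑ S : Finset V, D S * (α i * f (S.filter (fun j => ag j = i))) := h4
      _ = ∑ S : Finset V, α i * (D S * f (S.filter (fun j => ag j = i))) := by
          congr 1; ext S; ring
  rcases eq_or_lt_of_le hαi.1 with h0 | hpos
  · -- α i = 0
    have hα'i0 : α' i = 0 := by rw [hα'i, ← h0]; ring
    -- choose S' maximizing f among zero-cost subsets of A_i
    set C : Finset (Finset V) :=
      ((univ.filter (fun j => ag j = i)).powerset).filter (fun T => ∑ j ∈ T, c j ≤ 0) with hC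
    have hCne : C.Nonempty := ⟨∅, by simp [hC]⟩
    obtain ⟨S', hS'C, hS'max⟩ := Finset.exists_max_image C f hCne
    have hS'mem : S' ⊆ univ.filter (fun j => ag j = i) := by
      have := (Finset.mem_filter.mp hS'C).1
      exact Finset.mem_powerset.mp this
    have hS'cost : ∑ j ∈ S', c j ≤ 0 := (Finset.mem_filter.mp hS'C).2
    have hS'B : ∀ j ∈ S', ag j = i := by
      intro j hj
      have := hS'mem hj
      simp at this; exact this
    refine ⟨S', pne_aux ag f c hc i α' hzero S' hS'B ?_, ?_⟩
    · intro Ti hTi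
      rw [hα'i0]
      have : 0 ≤ ∑ j ∈ Ti, c j := Finset.sum_nonneg fun j _ => hc j
      simp only [zero_mul, zero_sub]
      linarith
    · -- every support set has zero cost, so its filter is in C
      have hcost0 : ∀ S : Finset V, D S * (∑ j ∈ S.filter (fun j => ag j = i), c j) = 0 := by
        have hle : ∑ S : Finset V, D S * (∑ j ∈ S.filter (fun j => ag j = i), c j) ≤ 0 := by
          rw [← h0] at hcost; linarith
        have hnn' : ∀ S ∈ (univ : Finset (Finset V)),
            0 ≤ D S * (∑ j ∈ S.filter (fun j => ag j = i), c j) := by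
          intro S _
          exact mul_nonneg (hD S) (Finset.sum_nonneg fun j _ => hc j)
        have heq : ∑ S : Finset V, D S * (∑ j ∈ S.filter (fun j => ag j = i), c j) = 0 :=
          le_antisymm hle (Finset.sum_nonneg hnn')
        intro S
        exact (Finset.sum_eq_zero_iff_of_nonneg hnn').mp heq S (Finset.mem_univ S)
      have hterm : ∀ S : Finset V, D S * f (S.filter (fun j => ag j = i)) ≤ D S * f S' := by
        intro S
        rcases eq_or_lt_of_le (hD S) with hDS | hDS
        · rw [← hDS]; simp
        · have hc0 : ∑ j ∈ S.filter (fun j => ag j = i), c j = 0 := by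
            have := hcost0 S
            exact (mul_eq_zero.mp this).resolve_left (by positivity)
          have hmemC : S.filter (fun j => ag j = i) ∈ C := by
            rw [hC, Finset.mem_filter, Finset.mem_powerset]
            exact ⟨Finset.filter_subset_filter _ (Finset.subset_univ S), le_of_eq hc0⟩
          exact mul_le_mul_of_nonneg_left (hS'max _ hmemC) (le_of_lt hDS)
      have hEle : E ≤ f S' := by
        calc E ≤ ∑ S : Finset V, D S * f S' := Finset.sum_le_sum fun S _ => hterm S
          _ = (∑ S : Finset V, D S) * f S' := by rw [Finset.sum_mul]
          _ = f S' := by rw [hDsum, one_mul]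
      have h1γ : (1 - 1/γ) ≤ 1 := by
        have : 0 < 1/γ := by positivity
        linarith
      nlinarith [hnn S']
  · -- α i > 0
    set g : Finset V → ℝ := fun T => γ * α i * f T - ∑ j ∈ T, c j with hg
    have hne : ((univ.filter (fun j => ag j = i)).powerset).Nonempty := ⟨∅, by simp⟩
    obtain ⟨S', hS'mem', hS'max⟩ :=
      Finset.exists_max_image ((univ.filter (fun j => ag j = i)).powerset) g hne
    have hS'mem : S' ⊆ univ.filter (fun j => ag j = i) := Finset.mem_powerset.mp hS'mem'
    have hS'B : ∀ j ∈ S', ag j = i := by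
      intro j hj
      have := hS'mem hj
      simp at this; exact this
    have hmax : ∀ Ti ⊆ univ.filter (fun j => ag j = i), g S' ≥ g Ti := by
      intro Ti hTi
      exact hS'max Ti (Finset.mem_powerset.mpr hTi)
    refine ⟨S', pne_aux ag f c hc i α' hzero S' hS'B ?_, ?_⟩
    · intro Ti hTi
      rw [hα'i]
      exact hmax Ti hTi
    · -- value bound
      have hgS' : ∀ S : Finset V, g (S.filter (fun j => ag j = i)) ≤ g S' := by
        intro S
        exact hmax _ (Finset.filter_subset_filter _ (Finset.subset_univ S))
      have hsum : ∑ S : Finset V, D S * g (S.filter (fun j => ag j = i)) ≤ g S' := by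
        calc ∑ S : Finset V, D S * g (S.filter (fun j => ag j = i))
            ≤ ∑ S : Finset V, D S * g S' :=
              Finset.sum_le_sum fun S _ => mul_le_mul_of_nonneg_left (hgS' S) (hD S)
          _ = (∑ S : Finset V, D S) * g S' := by rw [Finset.sum_mul]
          _ = g S' := by rw [hDsum, one_mul]
      have hexp : ∑ S : Finset V, D S * g (S.filter (fun j => ag j = i))
          = γ * α i * E - ∑ S : Finset V, D S * (∑ j ∈ S.filter (fun j => ag j = i), c j) := by
        rw [hE, Finset.mul_sum, ← Finset.sum_sub_distrib]
        congr 1; ext S; rw [hg]; ring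
      have hkey : (γ - 1) * α i * E ≤ g S' := by
        rw [hexp] at hsum
        nlinarith [hcost]
      have hgle : g S' ≤ γ * α i * f S' := by
        rw [hg]
        have : 0 ≤ ∑ j ∈ S', c j := Finset.sum_nonneg fun j _ => hc j
        simp only
        linarith
      -- conclude f S' ≥ (1 - 1/γ) E
      rw [ge_iff_le, ← sub_nonneg]
      have hγαi : 0 < γ * α i := mul_pos hγ0 hpos
      have hfin : (γ - 1) * α i * E ≤ γ * α i * f S' := le_trans hkey hgle
      have hdiv : (1 - 1/γ) * E = ((γ - 1) * α i * E) / (γ * α i) := by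
        field_simp
      rw [hdiv]
      rw [sub_nonneg, div_le_iff₀ hγαi]
      linarith [hfin]
end

section
/- Unbounded CCE–PNE gap for supermodular rewards: In the instance with agents 1,2 where A_1 = {1,2}, A_2 = {3}, reward f given by f(∅)=0, f({1})=0, f({2})=1, f({3})=0, f({1,2})=5.5, f({1,3})=1, f({2,3})=1, f({1,2,3})=10, and costs c(1)=0.75, c(2)=8.5, c(3)=0.25: (a) no contract α = (α_1, α_2) with α_1 + α_2 < 1 admits a pure Nash equilibrium giving the principal strictly positive utility; (b) under the contract α = (0.925, 1/18), the distribution placing probability 0.8 on the joint action {1,2,3} and 0.2 on ∅ is a coarse-correlated equilibrium, and the principal's expected utility under it equals (1 − 0.925 − 1/18) · 0.8 · 10 = 7/45 > 0. -/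
open Finset

/-- Reward function of Table 4: actions `1, 2, 3` encoded as `0, 1, 2 : Fin 3`.
Agent 1's action set is `{0, 1}`, agent 2's is `{2}`. -/
noncomputable def gapF (S : Finset (Fin 3)) : ℝ :=
  if S = {0, 1, 2} then 10
  else if S = {0, 1} then 5.5
  else if S = {0, 2} then 1
  else if S = {1, 2} then 1
  else if S = {1} then 1
  else 0

/-- Costs: `c(1) = 0.75`, `c(2) = 8.5`, `c(3) = 0.25`. -/
noncomputable def gapC : Fin 3 → ℝ := ![0.75, 8.5, 0.25]

/-- The distribution placing probability `0.8` on `{1,2,3}` and `0.2` on `∅`. -/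
noncomputable def gapD (S : Finset (Fin 3)) : ℝ :=
  if S = {0, 1, 2} then 0.8 else if S = ∅ then 0.2 else 0

/- Auxiliary evaluation lemmas. -/
lemma gapF_e : gapF ∅ = 0 := by
  unfold gapF
  rw [if_neg (by decide), if_neg (by decide), if_neg (by decide), if_neg (by decide),
    if_neg (by decide)]
lemma gapF_0 : gapF {0} = 0 := by
  unfold gapF
  rw [if_neg (by decide), if_neg (by decide), if_neg (by decide), if_neg (by decide),
    if_neg (by decide)]
lemma gapF_1 : gapF {1} = 1 := by
  unfold gapF
  rw [if_neg (by decide), if_neg (by decide), if_neg (by decide), if_neg (by decide), if_pos rfl]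
lemma gapF_2 : gapF {2} = 0 := by
  unfold gapF
  rw [if_neg (by decide), if_neg (by decide), if_neg (by decide), if_neg (by decide),
    if_neg (by decide)]
lemma gapF_01 : gapF {0, 1} = 5.5 := by
  unfold gapF; rw [if_neg (by decide), if_pos rfl]
lemma gapF_02 : gapF {0, 2} = 1 := by
  unfold gapF; rw [if_neg (by decide), if_neg (by decide), if_pos rfl]
lemma gapF_12 : gapF {1, 2} = 1 := by
  unfold gapF; rw [if_neg (by decide), if_neg (by decide), if_neg (by decide), if_pos rfl]
lemma gapF_012 : gapF {0, 1, 2} = 10 := by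
  unfold gapF; rw [if_pos rfl]

lemma gapC_e : ∑ j ∈ (∅ : Finset (Fin 3)), gapC j = 0 := by simp
lemma gapC_0 : ∑ j ∈ ({0} : Finset (Fin 3)), gapC j = 0.75 := by simp [gapC]
lemma gapC_1 : ∑ j ∈ ({1} : Finset (Fin 3)), gapC j = 8.5 := by simp [gapC]
lemma gapC_2 : ∑ j ∈ ({2} : Finset (Fin 3)), gapC j = 0.25 := by simp [gapC]
lemma gapC_01 : ∑ j ∈ ({0, 1} : Finset (Fin 3)), gapC j = 9.25 := by
  rw [Finset.sum_pair (by decide)]; norm_num [gapC]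

lemma sum_gapD (g : Finset (Fin 3) → ℝ) :
    ∑ S : Finset (Fin 3), gapD S * g S = 0.8 * g {0, 1, 2} + 0.2 * g ∅ := by
  rw [← Finset.sum_subset (Finset.subset_univ ({{0, 1, 2}, ∅} : Finset (Finset (Fin 3))))]
  · rw [Finset.sum_insert (by decide), Finset.sum_singleton]
    have h : (∅ : Finset (Fin 3)) ≠ {0, 1, 2} := by decide
    simp [gapD, h]
  · intro S _ hS
    simp only [Finset.mem_insert, Finset.mem_singleton, not_or] at hS
    simp [gapD, hS.1, hS.2]

/-- (a) in the instance above, no contract `(α₁, α₂) ∈ [0,1]²` with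
`α₁ + α₂ < 1` admits a pure Nash equilibrium giving the principal strictly positive
utility; (b) under the contract `(0.925, 1/18)` the distribution `gapD` is a
coarse-correlated equilibrium, and the principal's expected utility under it equals
`(1 − 0.925 − 1/18) · 0.8 · 10 = 7/45 > 0`. -/
theorem supermodular_unbounded_cce_pne_gap :
    (∀ α₁ α₂ : ℝ, 0 ≤ α₁ → α₁ ≤ 1 → 0 ≤ α₂ → α₂ ≤ 1 → α₁ + α₂ < 1 →
      ∀ S : Finset (Fin 3),
        ((∀ T₁ ⊆ ({0, 1} : Finset (Fin 3)),
            α₁ * gapF S - ∑ j ∈ S ∩ ({0, 1} : Finset (Fin 3)), gapC j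
              ≥ α₁ * gapF ((S ∩ ({2} : Finset (Fin 3))) ∪ T₁) - ∑ j ∈ T₁, gapC j)
          ∧ (∀ T₂ ⊆ ({2} : Finset (Fin 3)),
            α₂ * gapF S - ∑ j ∈ S ∩ ({2} : Finset (Fin 3)), gapC j
              ≥ α₂ * gapF ((S ∩ ({0, 1} : Finset (Fin 3))) ∪ T₂) - ∑ j ∈ T₂, gapC j))
        → (1 - α₁ - α₂) * gapF S ≤ 0)
    ∧
    ((∀ T₁ ⊆ ({0, 1} : Finset (Fin 3)),
        ∑ S : Finset (Fin 3), gapD S *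
            ((0.925 : ℝ) * gapF S - ∑ j ∈ S ∩ ({0, 1} : Finset (Fin 3)), gapC j)
          ≥ (∑ S : Finset (Fin 3), gapD S *
              ((0.925 : ℝ) * gapF ((S ∩ ({2} : Finset (Fin 3))) ∪ T₁)))
            - ∑ j ∈ T₁, gapC j)
      ∧ (∀ T₂ ⊆ ({2} : Finset (Fin 3)),
        ∑ S : Finset (Fin 3), gapD S *
            ((1/18 : ℝ) * gapF S - ∑ j ∈ S ∩ ({2} : Finset (Fin 3)), gapC j)
          ≥ (∑ S : Finset (Fin 3), gapD S *
              ((1/18 : ℝ) * gapF ((S ∩ ({0, 1} : Finset (Fin 3))) ∪ T₂)))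
            - ∑ j ∈ T₂, gapC j)
      ∧ (1 - 0.925 - 1/18 : ℝ) * ∑ S : Finset (Fin 3), gapD S * gapF S = 7/45
      ∧ (0 : ℝ) < 7/45) := by
  constructor
  · -- part (a)
    intro α₁ α₂ hα₁ hα₁' hα₂ hα₂' hsum S H
    obtain ⟨HA, HB⟩ := H
    simp only [gapF]
    split_ifs with h1 h2 h3 h4 h5
    · -- S = {0,1,2}
      subst h1
      exfalso
      have hA := HA {0} (by decide)
      have hB := HB ∅ (by decide)
      rw [show ({0, 1, 2} : Finset (Fin 3)) ∩ {0, 1} = {0, 1} from by decide,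
        show ({0, 1, 2} : Finset (Fin 3)) ∩ {2} = {2} from by decide,
        show (({2} : Finset (Fin 3)) ∪ {0}) = {0, 2} from by decide,
        gapF_012, gapF_02, gapC_01, gapC_0] at hA
      rw [show ({0, 1, 2} : Finset (Fin 3)) ∩ {2} = {2} from by decide,
        show ({0, 1, 2} : Finset (Fin 3)) ∩ {0, 1} = {0, 1} from by decide,
        show (({0, 1} : Finset (Fin 3)) ∪ ∅) = {0, 1} from by decide,
        gapF_012, gapF_01, gapC_2, gapC_e] at hB
      norm_num at hA hB
      linarith
    · -- S = {0,1}
      subst h2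
      exfalso
      have hA := HA ∅ (by decide)
      rw [show ({0, 1} : Finset (Fin 3)) ∩ {0, 1} = {0, 1} from by decide,
        show ({0, 1} : Finset (Fin 3)) ∩ {2} = ∅ from by decide,
        show ((∅ : Finset (Fin 3)) ∪ ∅) = ∅ from by decide,
        gapF_01, gapF_e, gapC_01, gapC_e] at hA
      norm_num at hA
      linarith
    · -- S = {0,2}
      subst h3
      exfalso
      have hA := HA ∅ (by decide)
      have hB := HB ∅ (by decide)
      rw [show ({0, 2} : Finset (Fin 3)) ∩ {0, 1} = {0} from by decide,
        show ({0, 2} : Finset (Fin 3)) ∩ {2} = {2} from by decide,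
        show (({2} : Finset (Fin 3)) ∪ ∅) = {2} from by decide,
        gapF_02, gapF_2, gapC_0, gapC_e] at hA
      rw [show ({0, 2} : Finset (Fin 3)) ∩ {2} = {2} from by decide,
        show ({0, 2} : Finset (Fin 3)) ∩ {0, 1} = {0} from by decide,
        show (({0} : Finset (Fin 3)) ∪ ∅) = {0} from by decide,
        gapF_02, gapF_0, gapC_2, gapC_e] at hB
      norm_num at hA hB
      linarith
    · -- S = {1,2}
      subst h4
      exfalso
      have hA := HA ∅ (by decide)
      rw [show ({1, 2} : Finset (Fin 3)) ∩ {0, 1} = {1} from by decide,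
        show ({1, 2} : Finset (Fin 3)) ∩ {2} = {2} from by decide,
        show (({2} : Finset (Fin 3)) ∪ ∅) = {2} from by decide,
        gapF_12, gapF_2, gapC_1, gapC_e] at hA
      norm_num at hA
      linarith
    · -- S = {1}
      subst h5
      exfalso
      have hA := HA ∅ (by decide)
      rw [show ({1} : Finset (Fin 3)) ∩ {0, 1} = {1} from by decide,
        show ({1} : Finset (Fin 3)) ∩ {2} = ∅ from by decide,
        show ((∅ : Finset (Fin 3)) ∪ ∅) = ∅ from by decide,
        gapF_1, gapF_e, gapC_1, gapC_e] at hA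
      norm_num at hA
      linarith
    · norm_num
  · refine ⟨?_, ?_, ?_, by norm_num⟩
    · -- agent 1 CCE inequalities
      intro T₁ hT₁
      have key : ∀ T : Finset (Fin 3), T ⊆ {0, 1} →
          T = ∅ ∨ T = {0} ∨ T = {1} ∨ T = {0, 1} := by decide
      rw [sum_gapD, sum_gapD,
        show ({0, 1, 2} : Finset (Fin 3)) ∩ {0, 1} = {0, 1} from by decide,
        show ((∅ : Finset (Fin 3)) ∩ {0, 1}) = ∅ from by decide,
        show ({0, 1, 2} : Finset (Fin 3)) ∩ {2} = {2} from by decide,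
        show ((∅ : Finset (Fin 3)) ∩ {2}) = ∅ from by decide,
        gapF_012, gapF_e, gapC_01, gapC_e]
      rcases key T₁ hT₁ with h | h | h | h <;> subst h
      · rw [show (({2} : Finset (Fin 3)) ∪ ∅) = {2} from by decide,
          show ((∅ : Finset (Fin 3)) ∪ ∅) = ∅ from by decide, gapF_2, gapF_e, gapC_e]
        norm_num
      · rw [show (({2} : Finset (Fin 3)) ∪ {0}) = {0, 2} from by decide,
          show ((∅ : Finset (Fin 3)) ∪ {0}) = {0} from by decide, gapF_02, gapF_0, gapC_0]
        norm_num
      · rw [show (({2} : Finset (Fin 3)) ∪ {1}) = {1, 2} from by decide,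
          show ((∅ : Finset (Fin 3)) ∪ {1}) = {1} from by decide, gapF_12, gapF_1, gapC_1]
        norm_num
      · rw [show (({2} : Finset (Fin 3)) ∪ {0, 1}) = {0, 1, 2} from by decide,
          show ((∅ : Finset (Fin 3)) ∪ {0, 1}) = {0, 1} from by decide,
          gapF_012, gapF_01, gapC_01]
        norm_num
    · -- agent 2 CCE inequalities
      intro T₂ hT₂
      have key : ∀ T : Finset (Fin 3), T ⊆ {2} → T = ∅ ∨ T = {2} := by decide
      rw [sum_gapD, sum_gapD,
        show ({0, 1, 2} : Finset (Fin 3)) ∩ {2} = {2} from by decide,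
        show ((∅ : Finset (Fin 3)) ∩ {2}) = ∅ from by decide,
        show ({0, 1, 2} : Finset (Fin 3)) ∩ {0, 1} = {0, 1} from by decide,
        show ((∅ : Finset (Fin 3)) ∩ {0, 1}) = ∅ from by decide,
        gapF_012, gapF_e, gapC_2, gapC_e]
      rcases key T₂ hT₂ with h | h <;> subst h
      · rw [show (({0, 1} : Finset (Fin 3)) ∪ ∅) = {0, 1} from by decide,
          show ((∅ : Finset (Fin 3)) ∪ ∅) = ∅ from by decide, gapF_01, gapF_e, gapC_e]
        norm_num
      · rw [show (({0, 1} : Finset (Fin 3)) ∪ {2}) = {0, 1, 2} from by decide,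
          show ((∅ : Finset (Fin 3)) ∪ {2}) = {2} from by decide, gapF_012, gapF_2, gapC_2]
        norm_num
    · rw [sum_gapD, gapF_012, gapF_e]
      norm_num
end
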